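/- Let D be a valid closed diagram and let D' be obtained from D by a single exchange (a right exchange D_{R,n} or left exchange D_{L,n} at an admissible height n). Then there exist bijections φ_F from the set of faces of D to the set of faces of D' and φ_C from the set of components of D to the set of components of D', and these bijections respect the neighbourhood relation: for every component c and face f of D, c ◊ f holds in D if and only if φ_C(c) ◊ φ_F(f) holds in D'. -/

import Mathlib

/-- Combinatorial encoding of a planar string diagram. -/
structure Diagram where
  S : ℕ
  N : ℕ
  H : ℕ → ℕ
  I : ℕ → ℕ
  O : ℕ → ℕ

namespace Diagram

/-- `D.Δ n = D.O n - D.I n`, as an integer. -/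
def Δ (D : Diagram) (n : ℕ) : ℤ := (D.O n : ℤ) - (D.I n : ℤ)

/-- Number of wires at each level. -/
def W (D : Diagram) : ℕ → ℤ
  | 0 => (D.S : ℤ)
  | n + 1 => D.W n + D.Δ n

/-- A diagram is valid when there are enough edges above each vertex. -/
def Valid (D : Diagram) : Prop :=
  ∀ n < D.N, ((D.H n + D.I n : ℕ) : ℤ) ≤ D.W n

/-- `D` admits a right exchange move at height `n`. -/
def AdmitsRight (D : Diagram) (n : ℕ) : Prop :=
  n + 1 < D.N ∧ D.H n + D.O n ≤ D.H (n + 1)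

/-- `D` admits a left exchange move at height `n`. -/
def AdmitsLeft (D : Diagram) (n : ℕ) : Prop :=
  n + 1 < D.N ∧ D.H (n + 1) + D.I (n + 1) ≤ D.H n

/-- The right exchange `D_{R,n}`.  (Note `D.H (n+1) + D.I n - D.O n` is the
natural-number rendering of `D.H (n+1) - D.Δ n`, exact under admissibility.) -/
def rightExchange (D : Diagram) (n : ℕ) : Diagram where
  S := D.S
  N := D.N
  H := fun m =>
    if m = n then D.H (n + 1) + D.I n - D.O n
    else if m = n + 1 then D.H n
    else D.H m
  I := fun m => if m = n then D.I (n + 1) else if m = n + 1 then D.I n else D.I m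
  O := fun m => if m = n then D.O (n + 1) else if m = n + 1 then D.O n else D.O m

/-- The left exchange `D_{L,n}`. -/
def leftExchange (D : Diagram) (n : ℕ) : Diagram where
  S := D.S
  N := D.N
  H := fun m =>
    if m = n then D.H (n + 1)
    else if m = n + 1 then D.H n + D.O (n + 1) - D.I (n + 1)
    else D.H m
  I := fun m => if m = n then D.I (n + 1) else if m = n + 1 then D.I n else D.I m
  O := fun m => if m = n then D.O (n + 1) else if m = n + 1 then D.O n else D.O m

/-- A closed diagram: no source and no target edges. -/
def Closed (D : Diagram) : Prop := D.S = 0 ∧ D.W D.N = 0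

end Diagram

open Diagram

/-- One right exchange step. -/
def RightStep (D E : Diagram) : Prop := ∃ n, D.AdmitsRight n ∧ E = D.rightExchange n

/-- Reflexive-transitive closure of right exchange: `D →R* E`. -/
def RightRT : Diagram → Diagram → Prop := Relation.ReflTransGen RightStep

/-- A diagram admitting no right exchange move (a right normal form). -/
def IsRightNormal (D : Diagram) : Prop := ∀ n, ¬ D.AdmitsRight n

/-- `p = (h, k)` is an input position of vertex `v`. -/
def IsInput (D : Diagram) (v : ℕ) (p : ℕ × ℕ) : Prop :=
  v < D.N ∧ p.1 = v ∧ D.H v ≤ p.2 ∧ p.2 < D.H v + D.I v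

/-- `p = (h, k)` is an output position of vertex `v`. -/
def IsOutput (D : Diagram) (v : ℕ) (p : ℕ × ℕ) : Prop :=
  v < D.N ∧ p.1 = v + 1 ∧ D.H v ≤ p.2 ∧ p.2 < D.H v + D.O v

/-- The edge at position `p` persists to position `q` at the next level. -/
def Persist (D : Diagram) (p q : ℕ × ℕ) : Prop :=
  p.1 < D.N ∧ q.1 = p.1 + 1 ∧ ((p.2 : ℤ) < D.W p.1) ∧
    ((p.2 < D.H p.1 ∧ q.2 = p.2) ∨
     (D.H p.1 + D.I p.1 ≤ p.2 ∧ ((q.2 : ℤ) = (p.2 : ℤ) + D.Δ p.1)))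

/-- There is a maximal edge from an output of `u` to an input of `v`. -/
def EdgeFromTo (D : Diagram) (u v : ℕ) : Prop :=
  ∃ p q, IsOutput D u p ∧ Relation.ReflTransGen (Persist D) p q ∧ IsInput D v q

/-- Vertices `u` and `v` are adjacent: some maximal edge runs from one to the other. -/
def Adjacent (D : Diagram) (u v : ℕ) : Prop := EdgeFromTo D u v ∨ EdgeFromTo D v u

/-- A diagram is connected when any two vertices are joined by a path of adjacencies. -/
def Connected (D : Diagram) : Prop :=
  ∀ u v, u < D.N → v < D.N → Relation.ReflTransGen (Adjacent D) u v

/-- Vertex `v` is incident to a maximal edge touching the top boundary (level 0). -/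
def TouchesTop (D : Diagram) (v : ℕ) : Prop :=
  ∃ (k : ℕ) (q : ℕ × ℕ), ((k : ℤ) < D.W 0) ∧
    Relation.ReflTransGen (Persist D) (0, k) q ∧ IsInput D v q

/-- Vertex `v` is incident to a maximal edge touching the bottom boundary (level `D.N`). -/
def TouchesBottom (D : Diagram) (v : ℕ) : Prop :=
  ∃ p q, IsOutput D v p ∧ Relation.ReflTransGen (Persist D) p q ∧ q.1 = D.N

/-- A diagram is boundary-connected if it is connected, or every vertex is joined by
a path of adjacencies to a vertex incident to a maximal edge touching a boundary. -/
def BoundaryConnected (D : Diagram) : Prop :=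
  Connected D ∨
    ∀ u, u < D.N → ∃ v, (TouchesTop D v ∨ TouchesBottom D v) ∧
      Relation.ReflTransGen (Adjacent D) u v

/-- A right reduction `A →R* B` as an explicit finite sequence of right exchange steps. -/
structure Reduction (A B : Diagram) where
  len : ℕ
  seq : ℕ → Diagram
  steps : ℕ → ℕ
  src : seq 0 = A
  tgt : seq len = B
  ok : ∀ i < len, (seq i).AdmitsRight (steps i) ∧ seq (i + 1) = (seq i).rightExchange (steps i)

/-- The action of an exchange at height `n` on the heights of vertices. -/
def swapAt (n h : ℕ) : ℕ := if h = n then n + 1 else if h = n + 1 then n else h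

namespace Reduction

variable {A B : Diagram}

/-- Trajectory of the vertex starting at height `h0` along the reduction. -/
def traj (r : Reduction A B) (h0 : ℕ) : ℕ → ℕ
  | 0 => h0
  | t + 1 => swapAt (r.steps t) (r.traj h0 t)

/-- Step `t` of the reduction involves the vertex with initial height `h0`. -/
def Involves (r : Reduction A B) (h0 t : ℕ) : Prop :=
  t < r.len ∧ (r.traj h0 t = r.steps t ∨ r.traj h0 t = r.steps t + 1)

/-- Step `t` of the reduction exchanges the vertices with initial heights `h0` and `h1`. -/
def ExchangeOf (r : Reduction A B) (h0 h1 t : ℕ) : Prop :=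
  t < r.len ∧
    ((r.traj h0 t = r.steps t ∧ r.traj h1 t = r.steps t + 1) ∨
     (r.traj h1 t = r.steps t ∧ r.traj h0 t = r.steps t + 1))

/-- The configuration at step `t` is collapsible: the only vertices whose height lies
between the heights of the two final vertices are the final vertices themselves.
Here `π` numbers the vertices of `A` so that `A.N - 2` and `A.N - 1` are the finals. -/
def CollapsibleAt (r : Reduction A B) (π : ℕ → ℕ) (t : ℕ) : Prop :=
  ∀ i, i < A.N →
    min (r.traj (π (A.N - 2)) t) (r.traj (π (A.N - 1)) t) ≤ r.traj (π i) t →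
    r.traj (π i) t ≤ max (r.traj (π (A.N - 2)) t) (r.traj (π (A.N - 1)) t) →
    i = A.N - 2 ∨ i = A.N - 1

/-- The reduction is a funnel: each non-final vertex is exchanged at most once with a
final vertex, and an exchange of two non-final vertices forces both to be exchanged
with a final vertex during the reduction, with two different final vertices. -/
def IsFunnel (r : Reduction A B) (π : ℕ → ℕ) : Prop :=
  (∀ i, i < A.N - 2 → ∀ t t',
      (r.ExchangeOf (π i) (π (A.N - 2)) t ∨ r.ExchangeOf (π i) (π (A.N - 1)) t) →
      (r.ExchangeOf (π i) (π (A.N - 2)) t' ∨ r.ExchangeOf (π i) (π (A.N - 1)) t') →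
      t = t') ∧
  (∀ i j t, i < A.N - 2 → j < A.N - 2 → r.ExchangeOf (π i) (π j) t →
      ((∃ t1, r.ExchangeOf (π i) (π (A.N - 2)) t1) ∧
       (∃ t2, r.ExchangeOf (π j) (π (A.N - 1)) t2)) ∨
      ((∃ t1, r.ExchangeOf (π i) (π (A.N - 1)) t1) ∧
       (∃ t2, r.ExchangeOf (π j) (π (A.N - 2)) t2)))

/-- The reduction is collapsible: source and target are collapsible, and any exchange
between a non-final vertex and a final vertex is immediately preceded or followed by
an exchange with the other final vertex. -/
def IsCollapsibleRed (r : Reduction A B) (π : ℕ → ℕ) : Prop :=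
  r.CollapsibleAt π 0 ∧ r.CollapsibleAt π r.len ∧
  ∀ i t, i < A.N - 2 →
    (r.ExchangeOf (π i) (π (A.N - 2)) t →
      r.ExchangeOf (π i) (π (A.N - 1)) (t + 1) ∨
      (1 ≤ t ∧ r.ExchangeOf (π i) (π (A.N - 1)) (t - 1))) ∧
    (r.ExchangeOf (π i) (π (A.N - 1)) t →
      r.ExchangeOf (π i) (π (A.N - 2)) (t + 1) ∨
      (1 ≤ t ∧ r.ExchangeOf (π i) (π (A.N - 2)) (t - 1)))

/-- Cost of a reduction at weight `w`: exchanges involving the last vertex (label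
`A.N - 1`) cost `w`, all others cost `1`. -/
def cost (r : Reduction A B) (π : ℕ → ℕ) (w : ℕ) : ℕ :=
  ∑ t ∈ Finset.range r.len,
    if r.traj (π (A.N - 1)) t = r.steps t ∨ r.traj (π (A.N - 1)) t = r.steps t + 1
    then w else 1

end Reduction

/-- The maximal edge starting at output position `p` of `u` ends at an input of `v`. -/
def EdgeStartsAt (D : Diagram) (u v : ℕ) (p : ℕ × ℕ) : Prop :=
  IsOutput D u p ∧ ∃ q, Relation.ReflTransGen (Persist D) p q ∧ IsInput D v q

/-- `π` numbers the vertices of a linear diagram `D`: it is a bijection from labels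
`0, …, D.N - 1` to heights, consecutive labels (and only those) are adjacent, with
exactly one edge between consecutive vertices; labels `0` and `D.N - 1` are the leaves. -/
def IsLinear (D : Diagram) (π : ℕ → ℕ) : Prop :=
  2 ≤ D.N ∧
  Set.BijOn π (Set.Iio D.N) (Set.Iio D.N) ∧
  (∀ i j, i < D.N → j < D.N → (Adjacent D (π i) (π j) ↔ (i + 1 = j ∨ j + 1 = i))) ∧
  (∀ i, i + 1 < D.N →
    ∃! p : ℕ × ℕ, EdgeStartsAt D (π i) (π (i + 1)) p ∨ EdgeStartsAt D (π (i + 1)) (π i) p)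

/-! ### Spots, places, faces and components (for closed diagrams) -/

/-- A spot `s_{h,k}`: the gap between the `k`-th and `(k+1)`-th edge at level `h`. -/
def ValidSpot (D : Diagram) (p : ℕ × ℕ) : Prop :=
  p.1 ≤ D.N ∧ ((p.2 : ℤ) ≤ D.W p.1)

def Spot (D : Diagram) := { p : ℕ × ℕ // ValidSpot D p }

/-- Adjacency of spots at consecutive levels. -/
def SpotAdj (D : Diagram) (s t : Spot D) : Prop :=
  t.1.1 = s.1.1 + 1 ∧ s.1.1 < D.N ∧
    ((t.1.2 = s.1.2 ∧ s.1.2 ≤ D.H s.1.1) ∨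
     ((t.1.2 : ℤ) = (s.1.2 : ℤ) + D.Δ s.1.1 ∧ D.H s.1.1 + D.I s.1.1 ≤ s.1.2))

/-- Faces are equivalence classes of spots under adjacency. -/
def faceSetoid (D : Diagram) : Setoid (Spot D) := Relation.EqvGen.setoid (SpotAdj D)

def Face (D : Diagram) := Quotient (faceSetoid D)

/-- Places: either the `k`-th edge crossing level `h` (with `1 ≤ k ≤ D.W h`),
encoded `Sum.inl (h, k)`, or the vertex `v_h`, encoded `Sum.inr h`. -/
def ValidPlace (D : Diagram) : (ℕ × ℕ) ⊕ ℕ → Prop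
  | Sum.inl (h, k) => h ≤ D.N ∧ 1 ≤ k ∧ ((k : ℤ) ≤ D.W h)
  | Sum.inr v => v < D.N

def Place (D : Diagram) := { p : (ℕ × ℕ) ⊕ ℕ // ValidPlace D p }

/-- Adjacency of places: places on the same edge at consecutive levels are adjacent,
and a place at an input or output position of a vertex is adjacent to that vertex. -/
def PlaceAdjRaw (D : Diagram) : (ℕ × ℕ) ⊕ ℕ → (ℕ × ℕ) ⊕ ℕ → Prop
  | Sum.inl (h, k), Sum.inl (h', k') =>
      h' = h + 1 ∧ h < D.N ∧
        ((k' = k ∧ k ≤ D.H h) ∨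
         ((k' : ℤ) = (k : ℤ) + D.Δ h ∧ D.H h + D.I h + 1 ≤ k))
  | Sum.inl (h, k), Sum.inr v =>
      (h = v ∧ D.H v + 1 ≤ k ∧ k ≤ D.H v + D.I v) ∨
      (h = v + 1 ∧ D.H v + 1 ≤ k ∧ k ≤ D.H v + D.O v)
  | Sum.inr v, Sum.inl (h, k) =>
      (h = v ∧ D.H v + 1 ≤ k ∧ k ≤ D.H v + D.I v) ∨
      (h = v + 1 ∧ D.H v + 1 ≤ k ∧ k ≤ D.H v + D.O v)
  | Sum.inr _, Sum.inr _ => False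

def PlaceAdj (D : Diagram) (p q : Place D) : Prop := PlaceAdjRaw D p.1 q.1

/-- Components are equivalence classes of places under adjacency. -/
def compSetoid (D : Diagram) : Setoid (Place D) := Relation.EqvGen.setoid (PlaceAdj D)

def Comp (D : Diagram) := Quotient (compSetoid D)

/-- A place and a spot at the same level are neighbours when the place is immediately
to the left or to the right of the spot. -/
def NbrPS (D : Diagram) (p : Place D) (s : Spot D) : Prop :=
  ∃ h k k', p.1 = Sum.inl (h, k') ∧ s.1 = (h, k) ∧ (k' = k ∨ k' = k + 1)

/-- A component neighbours a face (`c ◊ f`). -/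
def NbrCF (D : Diagram) (c : Comp D) (f : Face D) : Prop :=
  ∃ (p : Place D) (s : Spot D),
    Quotient.mk (compSetoid D) p = c ∧ Quotient.mk (faceSetoid D) s = f ∧ NbrPS D p s

/-- A boundary spot: `s_{h,0}` or `s_{h,D.W h}`. -/
def IsBoundarySpot (D : Diagram) (s : Spot D) : Prop :=
  s.1.2 = 0 ∨ (s.1.2 : ℤ) = D.W s.1.1

/-- The face of the boundary spot `s_{0,0}`. -/
def rootFace (D : Diagram) : Face D :=
  Quotient.mk (faceSetoid D) ⟨(0, 0), Nat.zero_le _, by simp [Diagram.W]⟩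

/-- The injection `I^D_s(E)` of a closed diagram `E` at the spot `s = s_{a,k}` of `D`. -/
def inject (D : Diagram) (a k : ℕ) (E : Diagram) : Diagram where
  S := D.S
  N := D.N + E.N
  H := fun h => if h < a then D.H h else if h < a + E.N then E.H (h - a) + k else D.H (h - E.N)
  I := fun h => if h < a then D.I h else if h < a + E.N then E.I (h - a) else D.I (h - E.N)
  O := fun h => if h < a then D.O h else if h < a + E.N then E.O (h - a) else D.O (h - E.N)

/-! ### Auxiliary development for the exchange theorem -/

namespace ExchProof
open Diagram Sum

section Basic

variable (D : Diagram) (n : ℕ)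

lemma rxN : (D.rightExchange n).N = D.N := rfl
lemma rxH_n : (D.rightExchange n).H n = D.H (n+1) + D.I n - D.O n := by
  simp [rightExchange]
lemma rxH_n1 : (D.rightExchange n).H (n+1) = D.H n := by
  simp [rightExchange]
lemma rxI_n : (D.rightExchange n).I n = D.I (n+1) := by simp [rightExchange]
lemma rxI_n1 : (D.rightExchange n).I (n+1) = D.I n := by simp [rightExchange]
lemma rxO_n : (D.rightExchange n).O n = D.O (n+1) := by simp [rightExchange]
lemma rxO_n1 : (D.rightExchange n).O (n+1) = D.O n := by simp [rightExchange]
lemma rxH (m : ℕ) (h1 : m ≠ n) (h2 : m ≠ n+1) :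
    (D.rightExchange n).H m = D.H m := by simp [rightExchange, h1, h2]
lemma rxI (m : ℕ) (h1 : m ≠ n) (h2 : m ≠ n+1) :
    (D.rightExchange n).I m = D.I m := by simp [rightExchange, h1, h2]
lemma rxO (m : ℕ) (h1 : m ≠ n) (h2 : m ≠ n+1) :
    (D.rightExchange n).O m = D.O m := by simp [rightExchange, h1, h2]
lemma rxD_n : (D.rightExchange n).Δ n = D.Δ (n+1) := by
  simp [Diagram.Δ, rightExchange]
lemma rxD_n1 : (D.rightExchange n).Δ (n+1) = D.Δ n := by
  simp [Diagram.Δ, rightExchange]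
lemma rxD (m : ℕ) (h1 : m ≠ n) (h2 : m ≠ n+1) :
    (D.rightExchange n).Δ m = D.Δ m := by simp [Diagram.Δ, rightExchange, h1, h2]

lemma lxD_n : (D.leftExchange n).Δ n = D.Δ (n+1) := by
  simp [Diagram.Δ, leftExchange]
lemma lxD_n1 : (D.leftExchange n).Δ (n+1) = D.Δ n := by
  simp [Diagram.Δ, leftExchange]
lemma lxD (m : ℕ) (h1 : m ≠ n) (h2 : m ≠ n+1) :
    (D.leftExchange n).Δ m = D.Δ m := by simp [Diagram.Δ, leftExchange, h1, h2]

lemma rxW : ∀ m, (D.rightExchange n).W m = if m = n+1 then D.W n + D.Δ (n+1) else D.W m := by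
  intro m
  induction m with
  | zero => rw [if_neg (by omega : (0:ℕ) ≠ n+1)]; rfl
  | succ m ih =>
    show (D.rightExchange n).W m + (D.rightExchange n).Δ m = _
    rcases eq_or_ne m n with h1 | h1
    · subst h1
      rw [ih, rxD_n]
      simp
    · rcases eq_or_ne m (n+1) with h2 | h2
      · subst h2
        rw [ih, rxD_n1]
        simp only [if_pos rfl, if_neg (by omega : n+1+1 ≠ n+1)]
        show D.W n + D.Δ (n+1) + D.Δ n = D.W n + D.Δ n + D.Δ (n+1)
        ring
      · rw [ih, if_neg h2, rxD _ _ _ h1 h2, if_neg (by omega : m+1 ≠ n+1)]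
        rfl

lemma lxW : ∀ m, (D.leftExchange n).W m = if m = n+1 then D.W n + D.Δ (n+1) else D.W m := by
  intro m
  induction m with
  | zero => rw [if_neg (by omega : (0:ℕ) ≠ n+1)]; rfl
  | succ m ih =>
    show (D.leftExchange n).W m + (D.leftExchange n).Δ m = _
    rcases eq_or_ne m n with h1 | h1
    · subst h1
      rw [ih, lxD_n]
      simp
    · rcases eq_or_ne m (n+1) with h2 | h2
      · subst h2
        rw [ih, lxD_n1]
        simp only [if_pos rfl, if_neg (by omega : n+1+1 ≠ n+1)]
        show D.W n + D.Δ (n+1) + D.Δ n = D.W n + D.Δ n + D.Δ (n+1)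
        ring
      · rw [ih, if_neg h2, lxD _ _ _ h1 h2, if_neg (by omega : m+1 ≠ n+1)]
        rfl

lemma diagram_ext {A B : Diagram} (hS : A.S = B.S) (hN : A.N = B.N)
    (hH : A.H = B.H) (hI : A.I = B.I) (hO : A.O = B.O) : A = B := by
  cases A; cases B; simp_all

lemma lx_rx (hA : D.AdmitsLeft n) : (D.leftExchange n).rightExchange n = D := by
  have hle : D.H (n+1) + D.I (n+1) ≤ D.H n := hA.2
  refine diagram_ext rfl rfl ?_ ?_ ?_
  · funext m
    simp only [rightExchange, leftExchange]
    rcases eq_or_ne m n with rfl | h1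
    · simp; omega
    · rcases eq_or_ne m (n+1) with rfl | h2
      · simp [h1]
      · simp [h1, h2]
  · funext m
    simp only [rightExchange, leftExchange]
    rcases eq_or_ne m n with rfl | h1
    · simp
    · rcases eq_or_ne m (n+1) with rfl | h2
      · simp [h1]
      · simp [h1, h2]
  · funext m
    simp only [rightExchange, leftExchange]
    rcases eq_or_ne m n with rfl | h1
    · simp
    · rcases eq_or_ne m (n+1) with rfl | h2
      · simp [h1]
      · simp [h1, h2]

lemma lx_valid (hV : D.Valid) (hA : D.AdmitsLeft n) : (D.leftExchange n).Valid := by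
  intro m hm
  rw [show (D.leftExchange n).N = D.N from rfl] at hm
  have hle : D.H (n+1) + D.I (n+1) ≤ D.H n := hA.2
  have hn1 : n + 1 < D.N := hA.1
  rw [lxW]
  rcases eq_or_ne m n with he | h1'
  · rw [he, if_neg (by omega)]
    have e1 : (D.leftExchange n).H n = D.H (n+1) := by simp [leftExchange]
    have e2 : (D.leftExchange n).I n = D.I (n+1) := by simp [leftExchange]
    rw [e1, e2]
    have h3 := hV n (by omega)
    push_cast
    omega
  · rcases eq_or_ne m (n+1) with rfl | h2
    · rw [if_pos rfl]
      have hWn := hV n (by omega)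
      have e1 : (D.leftExchange n).H (n+1) = D.H n + D.O (n+1) - D.I (n+1) := by
        simp [leftExchange]
      have e2 : (D.leftExchange n).I (n+1) = D.I n := by simp [leftExchange]
      rw [e1, e2]
      have hd : D.Δ (n+1) = (D.O (n+1) : ℤ) - D.I (n+1) := rfl
      rw [hd]
      push_cast
      omega
    · rw [if_neg h2]
      have e1 : (D.leftExchange n).H m = D.H m := by simp [leftExchange, h1', h2]
      have e2 : (D.leftExchange n).I m = D.I m := by simp [leftExchange, h1', h2]
      rw [e1, e2]
      exact hV m hm

lemma lx_admitsRight (hA : D.AdmitsLeft n) : (D.leftExchange n).AdmitsRight n := by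
  refine ⟨hA.1, ?_⟩
  have hle : D.H (n+1) + D.I (n+1) ≤ D.H n := hA.2
  have e1 : (D.leftExchange n).H n = D.H (n+1) := by simp [leftExchange]
  have e2 : (D.leftExchange n).O n = D.O (n+1) := by simp [leftExchange]
  have e3 : (D.leftExchange n).H (n+1) = D.H n + D.O (n+1) - D.I (n+1) := by simp [leftExchange]
  rw [e1, e2, e3]
  omega

end Basic

end ExchProof
namespace ExchProof
open Diagram Sum

/-- Push a spot of `D` away from level `n+1` (down if left of the lower vertex,
up otherwise). -/
def pS (D : Diagram) (n : ℕ) (s : ℕ × ℕ) : ℕ × ℕ :=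
  if s.1 = n+1 then
    (if s.2 ≤ D.H (n+1) then (n+2, s.2) else (n, s.2 + D.I n - D.O n))
  else s

/-- Push a spot of `D.rightExchange n` away from level `n+1`. -/
def pSE (D : Diagram) (n : ℕ) (s : ℕ × ℕ) : ℕ × ℕ :=
  if s.1 = n+1 then
    (if s.2 ≤ D.H (n+1) + D.I n - D.O n then (n, s.2) else (n+2, s.2 + D.O n - D.I n))
  else s

lemma eqv_congr {α : Type*} {r : α → α → Prop} {x y x' y' : α} (hx : x = x') (hy : y = y')
    (h : Relation.EqvGen r x' y') : Relation.EqvGen r x y := by subst hx; subst hy; exact h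

section Core

variable {D : Diagram} {n : ℕ}

lemma pS_fst (s : ℕ × ℕ) : (pS D n s).1 ≠ n + 1 := by
  unfold pS; split_ifs with h1 h2 <;> simp_all <;> omega

lemma pSE_fst (s : ℕ × ℕ) : (pSE D n s).1 ≠ n + 1 := by
  unfold pSE; split_ifs with h1 h2 <;> simp_all <;> omega

lemma valid_spot_iff (s : ℕ × ℕ) (hne : s.1 ≠ n+1) :
    ValidSpot D s ↔ ValidSpot (D.rightExchange n) s := by
  unfold ValidSpot
  rw [rxW, if_neg hne]
  exact Iff.rfl

lemma pS_validD (hV : D.Valid) (hA : D.AdmitsRight n) (s : ℕ × ℕ) (hs : ValidSpot D s) :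
    ValidSpot D (pS D n s) := by
  obtain ⟨hn1, hab⟩ := hA
  have hWa := hV n (by omega)
  have hWb := hV (n+1) hn1
  have hw1 : D.W (n+1) = D.W n + D.Δ n := by simp [Diagram.W]
  have hw2 : D.W (n+2) = D.W (n+1) + D.Δ (n+1) := by simp [Diagram.W]
  have hdn : D.Δ n = (D.O n : ℤ) - (D.I n : ℤ) := rfl
  have hdn1 : D.Δ (n+1) = (D.O (n+1) : ℤ) - (D.I (n+1) : ℤ) := rfl
  rw [hdn] at hw1; rw [hdn1] at hw2
  push_cast at hWa hWb
  obtain ⟨m, k⟩ := s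
  obtain ⟨hsN, hsW⟩ := hs
  unfold pS
  dsimp only at *
  split_ifs with h1 h2
  · subst h1
    exact ⟨by omega, by dsimp only; omega⟩
  · subst h1
    refine ⟨by omega, ?_⟩
    dsimp only
    omega
  · exact ⟨hsN, hsW⟩

lemma pS_validE (hV : D.Valid) (hA : D.AdmitsRight n) (s : ℕ × ℕ) (hs : ValidSpot D s) :
    ValidSpot (D.rightExchange n) (pS D n s) :=
  (valid_spot_iff _ (pS_fst s)).mp (pS_validD hV hA s hs)

lemma pSE_validE (hV : D.Valid) (hA : D.AdmitsRight n) (s : ℕ × ℕ)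
    (hs : ValidSpot (D.rightExchange n) s) :
    ValidSpot (D.rightExchange n) (pSE D n s) := by
  obtain ⟨hn1, hab⟩ := hA
  have hWa := hV n (by omega)
  have hWb := hV (n+1) hn1
  have hw1 : D.W (n+1) = D.W n + D.Δ n := by simp [Diagram.W]
  have hw2 : D.W (n+2) = D.W (n+1) + D.Δ (n+1) := by simp [Diagram.W]
  have hdn : D.Δ n = (D.O n : ℤ) - (D.I n : ℤ) := rfl
  have hdn1 : D.Δ (n+1) = (D.O (n+1) : ℤ) - (D.I (n+1) : ℤ) := rfl
  rw [hdn] at hw1; rw [hdn1] at hw2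
  push_cast at hWa hWb
  obtain ⟨m, k⟩ := s
  obtain ⟨hsN, hsW⟩ := hs
  rw [show (D.rightExchange n).N = D.N from rfl] at hsN
  rw [rxW] at hsW
  unfold pSE
  dsimp only at *
  split_ifs at hsW ⊢ with h1 h2
  · subst h1
    rw [hdn1] at hsW
    refine ⟨by show n ≤ D.N; omega, ?_⟩
    rw [rxW, if_neg (by omega)]
    dsimp only
    omega
  · subst h1
    rw [hdn1] at hsW
    refine ⟨by show n+2 ≤ D.N; omega, ?_⟩
    rw [rxW, if_neg (by omega)]
    dsimp only
    omega
  · exact ⟨hsN, by rw [rxW, if_neg h1]; exact hsW⟩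

lemma pSE_validD (hV : D.Valid) (hA : D.AdmitsRight n) (s : ℕ × ℕ)
    (hs : ValidSpot (D.rightExchange n) s) : ValidSpot D (pSE D n s) :=
  (valid_spot_iff _ (pSE_fst s)).mpr (pSE_validE hV hA s hs)

lemma pSE_id (s : ℕ × ℕ) (hne : s.1 ≠ n+1) : pSE D n s = s := by
  unfold pSE; rw [if_neg hne]

lemma pS_id (s : ℕ × ℕ) (hne : s.1 ≠ n+1) : pS D n s = s := by
  unfold pS; rw [if_neg hne]

end Core

end ExchProof
namespace ExchProof
open Diagram Sum Relation

section Core2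

variable {D : Diagram} {n : ℕ}

lemma pS_adj (hV : D.Valid) (hA : D.AdmitsRight n) (s t : Spot D) (h : SpotAdj D s t)
    (x y : Spot (D.rightExchange n)) (hx : x.1 = pS D n s.1) (hy : y.1 = pS D n t.1) :
    Relation.EqvGen (SpotAdj (D.rightExchange n)) x y := by
  obtain ⟨hn1, hab⟩ := hA
  have hWa := hV n (by omega)
  have hWb := hV (n+1) hn1
  have hw1 : D.W (n+1) = D.W n + ((D.O n : ℤ) - (D.I n : ℤ)) := by
    rw [show D.W (n+1) = D.W n + D.Δ n from by simp [Diagram.W]]; rfl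
  have hw2 : D.W (n+2) = D.W (n+1) + ((D.O (n+1) : ℤ) - (D.I (n+1) : ℤ)) := by
    rw [show D.W (n+2) = D.W (n+1) + D.Δ (n+1) from by simp [Diagram.W]]; rfl
  push_cast at hWa hWb
  have hdd1 : D.Δ (n+1) = (D.O (n+1) : ℤ) - (D.I (n+1) : ℤ) := rfl
  have eHn : (D.rightExchange n).H n = D.H (n+1) + D.I n - D.O n := rxH_n D n
  have eHn1 : (D.rightExchange n).H (n+1) = D.H n := rxH_n1 D n
  have eIn : (D.rightExchange n).I n = D.I (n+1) := rxI_n D n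
  have eIn1 : (D.rightExchange n).I (n+1) = D.I n := rxI_n1 D n
  have eDn : (D.rightExchange n).Δ n = (D.O (n+1) : ℤ) - (D.I (n+1) : ℤ) := by
    rw [rxD_n]; rfl
  have eDn1 : (D.rightExchange n).Δ (n+1) = (D.O n : ℤ) - (D.I n : ℤ) := by
    rw [rxD_n1]; rfl
  obtain ⟨⟨m, j⟩, hsv⟩ := s
  obtain ⟨⟨m2, k⟩, htv⟩ := t
  obtain ⟨h1, h2, h3⟩ := h
  dsimp only at h1 h2 h3 hx hy
  subst h1
  obtain ⟨hsN, hsW⟩ := hsv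
  obtain ⟨htN, htW⟩ := htv
  dsimp only at hsN hsW htN htW
  by_cases hm : m = n
  · subst hm
    -- everything below is in terms of m (= n)
    rw [pS_id (m, j) (by show m ≠ m+1; omega)] at hx
    have hvX : ValidSpot (D.rightExchange m) (m, j) :=
      ⟨by show m ≤ D.N; omega,
       by show (j:ℤ) ≤ (D.rightExchange m).W m; rw [rxW, if_neg (by omega)]; exact hsW⟩
    rcases h3 with ⟨hk, hj⟩ | ⟨hk, hj⟩
    · -- k = j, j ≤ H n : push t down to (n+2, k)
      have hvM : ValidSpot (D.rightExchange m) (m+1, j) :=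
        ⟨by show m+1 ≤ D.N; omega,
         by show (j:ℤ) ≤ (D.rightExchange m).W (m+1); rw [rxW, if_pos rfl, hdd1]; omega⟩
      rw [show pS D m (m+1, k) = (m+2, k) from by
        unfold pS; rw [if_pos rfl, if_pos (by omega)]] at hy
      have hvY : ValidSpot (D.rightExchange m) (m+2, k) :=
        ⟨by show m+2 ≤ D.N; omega,
         by show (k:ℤ) ≤ (D.rightExchange m).W (m+2); rw [rxW, if_neg (by omega)]; omega⟩
      refine eqv_congr (Subtype.ext hx) (Subtype.ext hy)
        (x' := ⟨(m, j), hvX⟩) (y' := ⟨(m+2, k), hvY⟩)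
        (EqvGen.trans _ (⟨(m+1, j), hvM⟩ : Spot (D.rightExchange m)) _
          (EqvGen.rel _ _ ?_) (EqvGen.rel _ _ ?_))
      · exact ⟨rfl, by show m < D.N; omega,
          Or.inl ⟨rfl, by show j ≤ (D.rightExchange m).H m; rw [eHn]; omega⟩⟩
      · exact ⟨rfl, by show m+1 < D.N; omega,
          Or.inl ⟨by show k = j; omega,
            by show j ≤ (D.rightExchange m).H (m+1); rw [eHn1]; omega⟩⟩
    · rw [show D.Δ m = (D.O m : ℤ) - (D.I m : ℤ) from rfl] at hk
      by_cases hkb : k ≤ D.H (m+1)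
      · rw [show pS D m (m+1, k) = (m+2, k) from by
          unfold pS; rw [if_pos rfl, if_pos hkb]] at hy
        have hvM : ValidSpot (D.rightExchange m) (m+1, j) :=
          ⟨by show m+1 ≤ D.N; omega,
           by show (j:ℤ) ≤ (D.rightExchange m).W (m+1); rw [rxW, if_pos rfl, hdd1]; omega⟩
        have hvY : ValidSpot (D.rightExchange m) (m+2, k) :=
          ⟨by show m+2 ≤ D.N; omega,
           by show (k:ℤ) ≤ (D.rightExchange m).W (m+2); rw [rxW, if_neg (by omega)]; omega⟩
        refine eqv_congr (Subtype.ext hx) (Subtype.ext hy)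
          (x' := ⟨(m, j), hvX⟩) (y' := ⟨(m+2, k), hvY⟩)
          (EqvGen.trans _ (⟨(m+1, j), hvM⟩ : Spot (D.rightExchange m)) _
            (EqvGen.rel _ _ ?_) (EqvGen.rel _ _ ?_))
        · exact ⟨rfl, by show m < D.N; omega,
            Or.inl ⟨rfl, by show j ≤ (D.rightExchange m).H m; rw [eHn]; omega⟩⟩
        · exact ⟨rfl, by show m+1 < D.N; omega,
            Or.inr ⟨by show (k:ℤ) = (j:ℤ) + (D.rightExchange m).Δ (m+1); rw [eDn1]; omega,
              by show (D.rightExchange m).H (m+1) + (D.rightExchange m).I (m+1) ≤ j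
                 rw [eHn1, eIn1]; omega⟩⟩
      · rw [show pS D m (m+1, k) = (m, j) from by
          unfold pS; rw [if_pos rfl, if_neg hkb]; exact congrArg _ (by omega)] at hy
        exact eqv_congr (Subtype.ext hx) (Subtype.ext hy)
          (x' := ⟨(m, j), hvX⟩) (y' := ⟨(m, j), hvX⟩) (EqvGen.refl _)
  · by_cases hm1 : m = n + 1
    · subst hm1
      rw [pS_id (n+1+1, k) (by show n+2 ≠ n+1; omega)] at hy
      have hvY : ValidSpot (D.rightExchange n) (n+1+1, k) :=
        ⟨by show n+2 ≤ D.N; omega,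
         by show (k:ℤ) ≤ (D.rightExchange n).W (n+2); rw [rxW, if_neg (by omega)]; exact htW⟩
      rcases h3 with ⟨hk, hj⟩ | ⟨hk, hj⟩
      · rw [show pS D n (n+1, j) = (n+1+1, k) from by
          unfold pS; rw [if_pos rfl, if_pos hj]; exact congrArg _ hk.symm] at hx
        exact eqv_congr (Subtype.ext hx) (Subtype.ext hy)
          (x' := ⟨(n+1+1, k), hvY⟩) (y' := ⟨(n+1+1, k), hvY⟩) (EqvGen.refl _)
      · rw [show D.Δ (n+1) = (D.O (n+1) : ℤ) - (D.I (n+1) : ℤ) from rfl] at hk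
        by_cases hjb : j ≤ D.H (n+1)
        · -- degenerate: I (n+1) = 0, j = H (n+1); chain under the vertex
          rw [show pS D n (n+1, j) = (n+2, j) from by
            unfold pS; rw [if_pos rfl, if_pos hjb]] at hx
          have hi0 : D.I (n+1) = 0 := by omega
          have hjeq : j = D.H (n+1) := by omega
          have hvX : ValidSpot (D.rightExchange n) (n+2, j) :=
            ⟨by show n+2 ≤ D.N; omega,
             by show (j:ℤ) ≤ (D.rightExchange n).W (n+2); rw [rxW, if_neg (by omega)]; omega⟩
          have hvM1 : ValidSpot (D.rightExchange n) (n+1, D.H (n+1) + D.I n - D.O n) :=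
            ⟨by show n+1 ≤ D.N; omega,
             by show ((D.H (n+1) + D.I n - D.O n : ℕ):ℤ) ≤ (D.rightExchange n).W (n+1)
                rw [rxW, if_pos rfl, hdd1]; omega⟩
          have hvM0 : ValidSpot (D.rightExchange n) (n, D.H (n+1) + D.I n - D.O n) :=
            ⟨by show n ≤ D.N; omega,
             by show ((D.H (n+1) + D.I n - D.O n : ℕ):ℤ) ≤ (D.rightExchange n).W n
                rw [rxW, if_neg (by omega)]; omega⟩
          have hvM2 : ValidSpot (D.rightExchange n)
              (n+1, D.H (n+1) + D.I n - D.O n + D.O (n+1)) :=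
            ⟨by show n+1 ≤ D.N; omega,
             by show ((D.H (n+1) + D.I n - D.O n + D.O (n+1) : ℕ):ℤ) ≤ (D.rightExchange n).W (n+1)
                rw [rxW, if_pos rfl, hdd1]; omega⟩
          refine eqv_congr (Subtype.ext hx) (Subtype.ext hy)
            (x' := ⟨(n+2, j), hvX⟩) (y' := ⟨(n+1+1, k), hvY⟩) ?_
          have a1 : SpotAdj (D.rightExchange n)
              ⟨(n+1, D.H (n+1) + D.I n - D.O n), hvM1⟩ ⟨(n+2, j), hvX⟩ :=
            ⟨rfl, by show n+1 < D.N; omega,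
              Or.inr ⟨by show (j:ℤ) = ((D.H (n+1) + D.I n - D.O n : ℕ):ℤ) + (D.rightExchange n).Δ (n+1); rw [eDn1]; omega,
                by show (D.rightExchange n).H (n+1) + (D.rightExchange n).I (n+1) ≤ _; rw [eHn1, eIn1]; show D.H n + D.I n ≤ D.H (n+1) + D.I n - D.O n; omega⟩⟩
          have a2 : SpotAdj (D.rightExchange n)
              ⟨(n, D.H (n+1) + D.I n - D.O n), hvM0⟩ ⟨(n+1, D.H (n+1) + D.I n - D.O n), hvM1⟩ :=
            ⟨rfl, by show n < D.N; omega,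
              Or.inl ⟨rfl, by show D.H (n+1) + D.I n - D.O n ≤ (D.rightExchange n).H n; rw [eHn]⟩⟩
          have a3 : SpotAdj (D.rightExchange n)
              ⟨(n, D.H (n+1) + D.I n - D.O n), hvM0⟩
              ⟨(n+1, D.H (n+1) + D.I n - D.O n + D.O (n+1)), hvM2⟩ :=
            ⟨rfl, by show n < D.N; omega,
              Or.inr ⟨by show ((D.H (n+1) + D.I n - D.O n + D.O (n+1) : ℕ):ℤ) = ((D.H (n+1) + D.I n - D.O n : ℕ):ℤ) + (D.rightExchange n).Δ n; rw [eDn]; omega,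
                by show (D.rightExchange n).H n + (D.rightExchange n).I n ≤ _; rw [eHn, eIn]; show D.H (n+1) + D.I n - D.O n + D.I (n+1) ≤ D.H (n+1) + D.I n - D.O n; omega⟩⟩
          have a4 : SpotAdj (D.rightExchange n)
              ⟨(n+1, D.H (n+1) + D.I n - D.O n + D.O (n+1)), hvM2⟩ ⟨(n+1+1, k), hvY⟩ :=
            ⟨rfl, by show n+1 < D.N; omega,
              Or.inr ⟨by show (k:ℤ) = ((D.H (n+1) + D.I n - D.O n + D.O (n+1) : ℕ):ℤ) + (D.rightExchange n).Δ (n+1); rw [eDn1]; omega,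
                by show (D.rightExchange n).H (n+1) + (D.rightExchange n).I (n+1) ≤ _; rw [eHn1, eIn1]; show D.H n + D.I n ≤ D.H (n+1) + D.I n - D.O n + D.O (n+1); omega⟩⟩
          exact EqvGen.trans _ _ _ (EqvGen.symm _ _ (EqvGen.rel _ _ a1))
            (EqvGen.trans _ _ _ (EqvGen.symm _ _ (EqvGen.rel _ _ a2))
              (EqvGen.trans _ _ _ (EqvGen.rel _ _ a3) (EqvGen.rel _ _ a4)))
        · -- s pushes up to (n, j + I n - O n)
          rw [show pS D n (n+1, j) = (n, j + D.I n - D.O n) from by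
            unfold pS; rw [if_pos rfl, if_neg hjb]] at hx
          have hvX : ValidSpot (D.rightExchange n) (n, j + D.I n - D.O n) :=
            ⟨by show n ≤ D.N; omega,
             by show ((j + D.I n - D.O n : ℕ):ℤ) ≤ (D.rightExchange n).W n
                rw [rxW, if_neg (by omega)]; omega⟩
          have hvM : ValidSpot (D.rightExchange n)
              (n+1, j + D.I n - D.O n + D.O (n+1) - D.I (n+1)) :=
            ⟨by show n+1 ≤ D.N; omega,
             by show ((j + D.I n - D.O n + D.O (n+1) - D.I (n+1) : ℕ):ℤ) ≤ (D.rightExchange n).W (n+1)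
                rw [rxW, if_pos rfl, hdd1]; omega⟩
          refine eqv_congr (Subtype.ext hx) (Subtype.ext hy)
            (x' := ⟨(n, j + D.I n - D.O n), hvX⟩) (y' := ⟨(n+1+1, k), hvY⟩)
            (EqvGen.trans _ (⟨(n+1, j + D.I n - D.O n + D.O (n+1) - D.I (n+1)), hvM⟩ :
              Spot (D.rightExchange n)) _ (EqvGen.rel _ _ ?_) (EqvGen.rel _ _ ?_))
          · exact ⟨rfl, by show n < D.N; omega,
              Or.inr ⟨by show ((j + D.I n - D.O n + D.O (n+1) - D.I (n+1) : ℕ):ℤ) = ((j + D.I n - D.O n : ℕ):ℤ) + (D.rightExchange n).Δ n; rw [eDn]; omega,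
                by show (D.rightExchange n).H n + (D.rightExchange n).I n ≤ _; rw [eHn, eIn]; show D.H (n+1) + D.I n - D.O n + D.I (n+1) ≤ j + D.I n - D.O n; omega⟩⟩
          · exact ⟨rfl, by show n+1 < D.N; omega,
              Or.inr ⟨by show (k:ℤ) = ((j + D.I n - D.O n + D.O (n+1) - D.I (n+1) : ℕ):ℤ) + (D.rightExchange n).Δ (n+1); rw [eDn1]; omega,
                by show (D.rightExchange n).H (n+1) + (D.rightExchange n).I (n+1) ≤ _; rw [eHn1, eIn1]; show D.H n + D.I n ≤ j + D.I n - D.O n + D.O (n+1) - D.I (n+1); omega⟩⟩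
    · -- m ∉ {n, n+1}: nothing moves
      rw [pS_id (m, j) (by show m ≠ n+1; omega)] at hx
      rw [pS_id (m+1, k) (by show m+1 ≠ n+1; omega)] at hy
      have hvX : ValidSpot (D.rightExchange n) (m, j) :=
        ⟨by show m ≤ D.N; omega,
         by show (j:ℤ) ≤ (D.rightExchange n).W m; rw [rxW, if_neg hm1]; exact hsW⟩
      have hvY : ValidSpot (D.rightExchange n) (m+1, k) :=
        ⟨by show m+1 ≤ D.N; omega,
         by show (k:ℤ) ≤ (D.rightExchange n).W (m+1); rw [rxW, if_neg (by omega)]; exact htW⟩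
      refine eqv_congr (Subtype.ext hx) (Subtype.ext hy)
        (x' := ⟨(m, j), hvX⟩) (y' := ⟨(m+1, k), hvY⟩) (EqvGen.rel _ _ ?_)
      refine ⟨rfl, by show m < D.N; omega, ?_⟩
      rcases h3 with ⟨hk, hj⟩ | ⟨hk, hj⟩
      · exact Or.inl ⟨hk, by show j ≤ (D.rightExchange n).H m; rw [rxH D n m hm hm1]; exact hj⟩
      · exact Or.inr ⟨by show (k:ℤ) = (j:ℤ) + (D.rightExchange n).Δ m; rw [rxD D n m hm hm1]; exact hk,
          by show (D.rightExchange n).H m + (D.rightExchange n).I m ≤ j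
             rw [rxH D n m hm hm1, rxI D n m hm hm1]; exact hj⟩

end Core2

end ExchProof
namespace ExchProof
open Diagram Sum Relation

section Core3

variable {D : Diagram} {n : ℕ}

lemma pSE_adj (hV : D.Valid) (hA : D.AdmitsRight n) (s t : Spot (D.rightExchange n))
    (h : SpotAdj (D.rightExchange n) s t)
    (x y : Spot D) (hx : x.1 = pSE D n s.1) (hy : y.1 = pSE D n t.1) :
    Relation.EqvGen (SpotAdj D) x y := by
  obtain ⟨hn1, hab⟩ := hA
  have hWa := hV n (by omega)
  have hWb := hV (n+1) hn1
  have hw1 : D.W (n+1) = D.W n + ((D.O n : ℤ) - (D.I n : ℤ)) := by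
    rw [show D.W (n+1) = D.W n + D.Δ n from by simp [Diagram.W]]; rfl
  have hw2 : D.W (n+2) = D.W (n+1) + ((D.O (n+1) : ℤ) - (D.I (n+1) : ℤ)) := by
    rw [show D.W (n+2) = D.W (n+1) + D.Δ (n+1) from by simp [Diagram.W]]; rfl
  push_cast at hWa hWb
  have hddn : D.Δ n = (D.O n : ℤ) - (D.I n : ℤ) := rfl
  have hdd1 : D.Δ (n+1) = (D.O (n+1) : ℤ) - (D.I (n+1) : ℤ) := rfl
  have eHn : (D.rightExchange n).H n = D.H (n+1) + D.I n - D.O n := rxH_n D n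
  have eHn1 : (D.rightExchange n).H (n+1) = D.H n := rxH_n1 D n
  have eIn : (D.rightExchange n).I n = D.I (n+1) := rxI_n D n
  have eIn1 : (D.rightExchange n).I (n+1) = D.I n := rxI_n1 D n
  have eDn : (D.rightExchange n).Δ n = (D.O (n+1) : ℤ) - (D.I (n+1) : ℤ) := by
    rw [rxD_n]; rfl
  have eDn1 : (D.rightExchange n).Δ (n+1) = (D.O n : ℤ) - (D.I n : ℤ) := by
    rw [rxD_n1]; rfl
  obtain ⟨⟨m, j⟩, hsv⟩ := s
  obtain ⟨⟨m2, k⟩, htv⟩ := t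
  obtain ⟨h1, h2, h3⟩ := h
  dsimp only at h1 h2 h3 hx hy
  subst h1
  obtain ⟨hsN, hsW⟩ := hsv
  obtain ⟨htN, htW⟩ := htv
  dsimp only at hsN hsW htN htW
  rw [show (D.rightExchange n).N = D.N from rfl] at hsN htN h2
  rw [rxW] at hsW htW
  by_cases hm : m = n
  · subst hm
    -- level m = n : s is untouched, t is at the middle level of E
    rw [if_neg (by omega)] at hsW
    rw [if_pos rfl, hdd1] at htW
    rw [pSE_id (m, j) (by show m ≠ m+1; omega)] at hx
    rw [eHn] at h3
    have hvX : ValidSpot D (m, j) := ⟨by show m ≤ D.N; omega, hsW⟩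
    rcases h3 with ⟨hk, hj⟩ | ⟨hk, hj⟩
    · -- k = j ≤ c : t pushes up to the same spot
      rw [show pSE D m (m+1, k) = (m, j) from by
        unfold pSE; rw [if_pos rfl, if_pos (by omega)]; exact congrArg _ (by omega)] at hy
      exact eqv_congr (Subtype.ext hx) (Subtype.ext hy)
        (x' := ⟨(m, j), hvX⟩) (y' := ⟨(m, j), hvX⟩) (EqvGen.refl _)
    · rw [eDn] at hk
      rw [eIn] at hj
      have hvM1 : ValidSpot D (m+1, j + D.O m - D.I m) :=
        ⟨by show m+1 ≤ D.N; omega, by show ((j + D.O m - D.I m : ℕ):ℤ) ≤ D.W (m+1); omega⟩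
      have a1 : SpotAdj D ⟨(m, j), hvX⟩ ⟨(m+1, j + D.O m - D.I m), hvM1⟩ :=
        ⟨rfl, by show m < D.N; omega,
         Or.inr ⟨by show ((j + D.O m - D.I m : ℕ):ℤ) = (j:ℤ) + D.Δ m; rw [hddn]; omega,
          by show D.H m + D.I m ≤ j; omega⟩⟩
      by_cases hkc : k ≤ D.H (m+1) + D.I m - D.O m
      · -- degenerate: O (m+1) = 0; chain under the vertex
        rw [show pSE D m (m+1, k) = (m, k) from by
          unfold pSE; rw [if_pos rfl, if_pos hkc]] at hy
        have hvY : ValidSpot D (m, k) :=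
          ⟨by show m ≤ D.N; omega, by show (k:ℤ) ≤ D.W m; omega⟩
        have hvM2 : ValidSpot D (m+2, k + D.O m - D.I m) :=
          ⟨by show m+2 ≤ D.N; omega, by show ((k + D.O m - D.I m : ℕ):ℤ) ≤ D.W (m+2); omega⟩
        have hvM3 : ValidSpot D (m+1, k + D.O m - D.I m) :=
          ⟨by show m+1 ≤ D.N; omega, by show ((k + D.O m - D.I m : ℕ):ℤ) ≤ D.W (m+1); omega⟩
        have a2 : SpotAdj D ⟨(m+1, j + D.O m - D.I m), hvM1⟩ ⟨(m+2, k + D.O m - D.I m), hvM2⟩ :=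
          ⟨rfl, by show m+1 < D.N; omega,
           Or.inr ⟨by show ((k + D.O m - D.I m : ℕ):ℤ) = ((j + D.O m - D.I m : ℕ):ℤ) + D.Δ (m+1); rw [hdd1]; omega,
            by show D.H (m+1) + D.I (m+1) ≤ j + D.O m - D.I m; omega⟩⟩
        have a3 : SpotAdj D ⟨(m+1, k + D.O m - D.I m), hvM3⟩ ⟨(m+2, k + D.O m - D.I m), hvM2⟩ :=
          ⟨rfl, by show m+1 < D.N; omega,
           Or.inl ⟨rfl, by show k + D.O m - D.I m ≤ D.H (m+1); omega⟩⟩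
        have a4 : SpotAdj D ⟨(m, k), hvY⟩ ⟨(m+1, k + D.O m - D.I m), hvM3⟩ :=
          ⟨rfl, by show m < D.N; omega,
           Or.inr ⟨by show ((k + D.O m - D.I m : ℕ):ℤ) = (k:ℤ) + D.Δ m; rw [hddn]; omega,
            by show D.H m + D.I m ≤ k; omega⟩⟩
        refine eqv_congr (Subtype.ext hx) (Subtype.ext hy)
          (x' := ⟨(m, j), hvX⟩) (y' := ⟨(m, k), hvY⟩) ?_
        exact EqvGen.trans _ _ _ (EqvGen.rel _ _ a1)
          (EqvGen.trans _ _ _ (EqvGen.rel _ _ a2)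
            (EqvGen.trans _ _ _ (EqvGen.symm _ _ (EqvGen.rel _ _ a3))
              (EqvGen.symm _ _ (EqvGen.rel _ _ a4))))
      · rw [show pSE D m (m+1, k) = (m+2, k + D.O m - D.I m) from by
          unfold pSE; rw [if_pos rfl, if_neg hkc]] at hy
        have hvY : ValidSpot D (m+2, k + D.O m - D.I m) :=
          ⟨by show m+2 ≤ D.N; omega, by show ((k + D.O m - D.I m : ℕ):ℤ) ≤ D.W (m+2); omega⟩
        have a2 : SpotAdj D ⟨(m+1, j + D.O m - D.I m), hvM1⟩ ⟨(m+2, k + D.O m - D.I m), hvY⟩ :=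
          ⟨rfl, by show m+1 < D.N; omega,
           Or.inr ⟨by show ((k + D.O m - D.I m : ℕ):ℤ) = ((j + D.O m - D.I m : ℕ):ℤ) + D.Δ (m+1); rw [hdd1]; omega,
            by show D.H (m+1) + D.I (m+1) ≤ j + D.O m - D.I m; omega⟩⟩
        exact eqv_congr (Subtype.ext hx) (Subtype.ext hy)
          (x' := ⟨(m, j), hvX⟩) (y' := ⟨(m+2, k + D.O m - D.I m), hvY⟩)
          (EqvGen.trans _ _ _ (EqvGen.rel _ _ a1) (EqvGen.rel _ _ a2))
  · by_cases hm1 : m = n + 1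
    · subst hm1
      -- s at the middle level of E, t = (n+2, k) untouched
      rw [if_pos rfl, hdd1] at hsW
      rw [if_neg (by omega)] at htW
      rw [pSE_id (n+1+1, k) (by show n+2 ≠ n+1; omega)] at hy
      rw [eHn1] at h3
      have hvY : ValidSpot D (n+1+1, k) := ⟨by show n+2 ≤ D.N; omega, htW⟩
      rcases h3 with ⟨hk, hj⟩ | ⟨hk, hj⟩
      · -- k = j ≤ H n : push s up to (n, j)
        rw [show pSE D n (n+1, j) = (n, j) from by
          unfold pSE; rw [if_pos rfl, if_pos (by omega)]] at hx
        have hvX : ValidSpot D (n, j) :=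
          ⟨by show n ≤ D.N; omega, by show (j:ℤ) ≤ D.W n; omega⟩
        have hvM : ValidSpot D (n+1, j) :=
          ⟨by show n+1 ≤ D.N; omega, by show (j:ℤ) ≤ D.W (n+1); omega⟩
        refine eqv_congr (Subtype.ext hx) (Subtype.ext hy)
          (x' := ⟨(n, j), hvX⟩) (y' := ⟨(n+1+1, k), hvY⟩)
          (EqvGen.trans _ (⟨(n+1, j), hvM⟩ : Spot D) _
            (EqvGen.rel _ _ ?_) (EqvGen.rel _ _ ?_))
        · exact ⟨rfl, by show n < D.N; omega, Or.inl ⟨rfl, by show j ≤ D.H n; omega⟩⟩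
        · exact ⟨rfl, by show n+1 < D.N; omega,
            Or.inl ⟨by show k = j; omega, by show j ≤ D.H (n+1); omega⟩⟩
      · rw [eDn1] at hk
        rw [eIn1] at hj
        by_cases hjc : j ≤ D.H (n+1) + D.I n - D.O n
        · -- push s up to (n, j)
          rw [show pSE D n (n+1, j) = (n, j) from by
            unfold pSE; rw [if_pos rfl, if_pos hjc]] at hx
          have hvX : ValidSpot D (n, j) :=
            ⟨by show n ≤ D.N; omega, by show (j:ℤ) ≤ D.W n; omega⟩
          have hvM : ValidSpot D (n+1, j + D.O n - D.I n) :=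
            ⟨by show n+1 ≤ D.N; omega, by show ((j + D.O n - D.I n : ℕ):ℤ) ≤ D.W (n+1); omega⟩
          refine eqv_congr (Subtype.ext hx) (Subtype.ext hy)
            (x' := ⟨(n, j), hvX⟩) (y' := ⟨(n+1+1, k), hvY⟩)
            (EqvGen.trans _ (⟨(n+1, j + D.O n - D.I n), hvM⟩ : Spot D) _
              (EqvGen.rel _ _ ?_) (EqvGen.rel _ _ ?_))
          · exact ⟨rfl, by show n < D.N; omega,
              Or.inr ⟨by show ((j + D.O n - D.I n : ℕ):ℤ) = (j:ℤ) + D.Δ n; rw [hddn]; omega,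
                by show D.H n + D.I n ≤ j; omega⟩⟩
          · exact ⟨rfl, by show n+1 < D.N; omega,
              Or.inl ⟨by show k = j + D.O n - D.I n; omega,
                by show j + D.O n - D.I n ≤ D.H (n+1); omega⟩⟩
        · -- push s down to (n+2, j + O n - I n) = (n+2, k)
          rw [show pSE D n (n+1, j) = (n+1+1, k) from by
            unfold pSE; rw [if_pos rfl, if_neg hjc]; exact congrArg _ (by omega)] at hx
          exact eqv_congr (Subtype.ext hx) (Subtype.ext hy)
            (x' := ⟨(n+1+1, k), hvY⟩) (y' := ⟨(n+1+1, k), hvY⟩) (EqvGen.refl _)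
    · -- m ∉ {n, n+1}
      rw [if_neg hm1] at hsW
      rw [if_neg (by omega)] at htW
      rw [pSE_id (m, j) (by show m ≠ n+1; omega)] at hx
      rw [pSE_id (m+1, k) (by show m+1 ≠ n+1; omega)] at hy
      have hvX : ValidSpot D (m, j) := ⟨by show m ≤ D.N; omega, hsW⟩
      have hvY : ValidSpot D (m+1, k) := ⟨by show m+1 ≤ D.N; omega, htW⟩
      refine eqv_congr (Subtype.ext hx) (Subtype.ext hy)
        (x' := ⟨(m, j), hvX⟩) (y' := ⟨(m+1, k), hvY⟩) (EqvGen.rel _ _ ?_)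
      refine ⟨rfl, by show m < D.N; omega, ?_⟩
      rw [rxH D n m hm hm1] at h3
      rcases h3 with ⟨hk, hj⟩ | ⟨hk, hj⟩
      · exact Or.inl ⟨hk, hj⟩
      · rw [rxD D n m hm hm1] at hk
        rw [rxI D n m hm hm1] at hj
        exact Or.inr ⟨hk, hj⟩

end Core3

end ExchProof
namespace ExchProof
open Diagram Sum Relation

section Core4

variable {D : Diagram} {n : ℕ}

lemma pS_equiv (hV : D.Valid) (hA : D.AdmitsRight n) (s x : Spot D) (hx : x.1 = pS D n s.1) :
    Relation.EqvGen (SpotAdj D) s x := by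
  obtain ⟨hn1, hab⟩ := hA
  have hWa := hV n (by omega)
  have hWb := hV (n+1) hn1
  have hw1 : D.W (n+1) = D.W n + ((D.O n : ℤ) - (D.I n : ℤ)) := by
    rw [show D.W (n+1) = D.W n + D.Δ n from by simp [Diagram.W]]; rfl
  have hw2 : D.W (n+2) = D.W (n+1) + ((D.O (n+1) : ℤ) - (D.I (n+1) : ℤ)) := by
    rw [show D.W (n+2) = D.W (n+1) + D.Δ (n+1) from by simp [Diagram.W]]; rfl
  push_cast at hWa hWb
  have hddn : D.Δ n = (D.O n : ℤ) - (D.I n : ℤ) := rfl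
  obtain ⟨⟨m, k⟩, hsv⟩ := s
  obtain ⟨hsN, hsW⟩ := hsv
  dsimp only at hsN hsW hx
  by_cases hm : m = n+1
  · subst hm
    by_cases hk : k ≤ D.H (n+1)
    · rw [show pS D n (n+1, k) = (n+2, k) from by unfold pS; rw [if_pos rfl, if_pos hk]] at hx
      have hvY : ValidSpot D (n+2, k) :=
        ⟨by show n+2 ≤ D.N; omega, by show (k:ℤ) ≤ D.W (n+2); omega⟩
      refine eqv_congr (x' := ⟨(n+1, k), ⟨hsN, hsW⟩⟩) (y' := ⟨(n+2, k), hvY⟩)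
        (Subtype.ext rfl) (Subtype.ext hx) (EqvGen.rel _ _ ?_)
      exact ⟨rfl, by show n+1 < D.N; omega, Or.inl ⟨rfl, by show k ≤ D.H (n+1); omega⟩⟩
    · rw [show pS D n (n+1, k) = (n, k + D.I n - D.O n) from by
        unfold pS; rw [if_pos rfl, if_neg hk]] at hx
      have hvY : ValidSpot D (n, k + D.I n - D.O n) :=
        ⟨by show n ≤ D.N; omega, by show ((k + D.I n - D.O n : ℕ):ℤ) ≤ D.W n; omega⟩
      refine eqv_congr (x' := ⟨(n+1, k), ⟨hsN, hsW⟩⟩) (y' := ⟨(n, k + D.I n - D.O n), hvY⟩)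
        (Subtype.ext rfl) (Subtype.ext hx) (EqvGen.symm _ _ (EqvGen.rel _ _ ?_))
      exact ⟨rfl, by show n < D.N; omega,
        Or.inr ⟨by show (k:ℤ) = ((k + D.I n - D.O n : ℕ):ℤ) + D.Δ n; rw [hddn]; omega,
          by show D.H n + D.I n ≤ k + D.I n - D.O n; omega⟩⟩
  · rw [pS_id (m, k) hm] at hx
    exact eqv_congr (x' := ⟨(m, k), ⟨hsN, hsW⟩⟩) (y' := ⟨(m, k), ⟨hsN, hsW⟩⟩)
      (Subtype.ext rfl) (Subtype.ext hx) (EqvGen.refl _)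

lemma pSE_equiv (hV : D.Valid) (hA : D.AdmitsRight n) (s x : Spot (D.rightExchange n))
    (hx : x.1 = pSE D n s.1) :
    Relation.EqvGen (SpotAdj (D.rightExchange n)) s x := by
  obtain ⟨hn1, hab⟩ := hA
  have hWa := hV n (by omega)
  have hWb := hV (n+1) hn1
  have hw1 : D.W (n+1) = D.W n + ((D.O n : ℤ) - (D.I n : ℤ)) := by
    rw [show D.W (n+1) = D.W n + D.Δ n from by simp [Diagram.W]]; rfl
  have hw2 : D.W (n+2) = D.W (n+1) + ((D.O (n+1) : ℤ) - (D.I (n+1) : ℤ)) := by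
    rw [show D.W (n+2) = D.W (n+1) + D.Δ (n+1) from by simp [Diagram.W]]; rfl
  push_cast at hWa hWb
  have eHn : (D.rightExchange n).H n = D.H (n+1) + D.I n - D.O n := rxH_n D n
  have eHn1 : (D.rightExchange n).H (n+1) = D.H n := rxH_n1 D n
  have eIn1 : (D.rightExchange n).I (n+1) = D.I n := rxI_n1 D n
  have eDn1 : (D.rightExchange n).Δ (n+1) = (D.O n : ℤ) - (D.I n : ℤ) := by
    rw [rxD_n1]; rfl
  obtain ⟨⟨m, k⟩, hsv⟩ := s
  obtain ⟨hsN, hsW⟩ := hsv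
  dsimp only at hsN hsW hx
  rw [show (D.rightExchange n).N = D.N from rfl] at hsN
  rw [rxW] at hsW
  by_cases hm : m = n+1
  · subst hm
    rw [if_pos rfl, show D.Δ (n+1) = (D.O (n+1) : ℤ) - (D.I (n+1) : ℤ) from rfl] at hsW
    have hsv' : ValidSpot (D.rightExchange n) (n+1, k) :=
      ⟨by show n+1 ≤ D.N; omega,
       by show (k:ℤ) ≤ (D.rightExchange n).W (n+1)
          rw [rxW, if_pos rfl, show D.Δ (n+1) = (D.O (n+1) : ℤ) - (D.I (n+1) : ℤ) from rfl]
          omega⟩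
    by_cases hk : k ≤ D.H (n+1) + D.I n - D.O n
    · rw [show pSE D n (n+1, k) = (n, k) from by unfold pSE; rw [if_pos rfl, if_pos hk]] at hx
      have hvY : ValidSpot (D.rightExchange n) (n, k) :=
        ⟨by show n ≤ D.N; omega,
         by show (k:ℤ) ≤ (D.rightExchange n).W n; rw [rxW, if_neg (by omega)]; omega⟩
      refine eqv_congr (x' := ⟨(n+1, k), hsv'⟩) (y' := ⟨(n, k), hvY⟩)
        (Subtype.ext rfl) (Subtype.ext hx) (EqvGen.symm _ _ (EqvGen.rel _ _ ?_))
      exact ⟨rfl, by show n < D.N; omega,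
        Or.inl ⟨rfl, by show k ≤ (D.rightExchange n).H n; rw [eHn]; omega⟩⟩
    · rw [show pSE D n (n+1, k) = (n+2, k + D.O n - D.I n) from by
        unfold pSE; rw [if_pos rfl, if_neg hk]] at hx
      have hvY : ValidSpot (D.rightExchange n) (n+2, k + D.O n - D.I n) :=
        ⟨by show n+2 ≤ D.N; omega,
         by show ((k + D.O n - D.I n : ℕ):ℤ) ≤ (D.rightExchange n).W (n+2)
            rw [rxW, if_neg (by omega)]; omega⟩
      refine eqv_congr (x' := ⟨(n+1, k), hsv'⟩) (y' := ⟨(n+2, k + D.O n - D.I n), hvY⟩)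
        (Subtype.ext rfl) (Subtype.ext hx) (EqvGen.rel _ _ ?_)
      exact ⟨rfl, by show n+1 < D.N; omega,
        Or.inr ⟨by show ((k + D.O n - D.I n : ℕ):ℤ) = (k:ℤ) + (D.rightExchange n).Δ (n+1); rw [eDn1]; omega,
          by show (D.rightExchange n).H (n+1) + (D.rightExchange n).I (n+1) ≤ k
             rw [eHn1, eIn1]; omega⟩⟩
  · rw [pSE_id (m, k) hm] at hx
    rw [if_neg hm] at hsW
    have hsv' : ValidSpot (D.rightExchange n) (m, k) :=
      ⟨by show m ≤ D.N; omega,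
       by show (k:ℤ) ≤ (D.rightExchange n).W m; rw [rxW, if_neg hm]; exact hsW⟩
    exact eqv_congr (x' := ⟨(m, k), hsv'⟩) (y' := ⟨(m, k), hsv'⟩)
      (Subtype.ext rfl) (Subtype.ext hx) (EqvGen.refl _)

/-- The spot map `Spot D → Spot (D.rightExchange n)`. -/
def fSpot (hV : D.Valid) (hA : D.AdmitsRight n) (s : Spot D) : Spot (D.rightExchange n) :=
  ⟨pS D n s.1, pS_validE hV hA s.1 s.2⟩

/-- The spot map `Spot (D.rightExchange n) → Spot D`. -/
def gSpot (hV : D.Valid) (hA : D.AdmitsRight n) (t : Spot (D.rightExchange n)) : Spot D :=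
  ⟨pSE D n t.1, pSE_validD hV hA t.1 t.2⟩

lemma pS_adj_star (hV : D.Valid) (hA : D.AdmitsRight n) {a b : Spot D}
    (h : Relation.EqvGen (SpotAdj D) a b) :
    Relation.EqvGen (SpotAdj (D.rightExchange n)) (fSpot hV hA a) (fSpot hV hA b) := by
  induction h with
  | rel a b hab => exact pS_adj hV hA a b hab _ _ rfl rfl
  | refl a => exact EqvGen.refl _
  | symm a b _ ih => exact EqvGen.symm _ _ ih
  | trans a b c _ _ ih1 ih2 => exact EqvGen.trans _ _ _ ih1 ih2

lemma pSE_adj_star (hV : D.Valid) (hA : D.AdmitsRight n) {a b : Spot (D.rightExchange n)}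
    (h : Relation.EqvGen (SpotAdj (D.rightExchange n)) a b) :
    Relation.EqvGen (SpotAdj D) (gSpot hV hA a) (gSpot hV hA b) := by
  induction h with
  | rel a b hab => exact pSE_adj hV hA a b hab _ _ rfl rfl
  | refl a => exact EqvGen.refl _
  | symm a b _ ih => exact EqvGen.symm _ _ ih
  | trans a b c _ _ ih1 ih2 => exact EqvGen.trans _ _ _ ih1 ih2

lemma gf_spot (hV : D.Valid) (hA : D.AdmitsRight n) (s : Spot D) :
    Relation.EqvGen (SpotAdj D) (gSpot hV hA (fSpot hV hA s)) s := by
  refine EqvGen.symm _ _ ?_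
  refine Relation.EqvGen.trans _ (fSpot hV hA s |> gSpot hV hA) _ ?_ (EqvGen.refl _)
  exact pS_equiv hV hA s _ (by
    show (gSpot hV hA (fSpot hV hA s)).1 = pS D n s.1
    show pSE D n (pS D n s.1) = pS D n s.1
    exact pSE_id _ (pS_fst _))

lemma fg_spot (hV : D.Valid) (hA : D.AdmitsRight n) (t : Spot (D.rightExchange n)) :
    Relation.EqvGen (SpotAdj (D.rightExchange n)) (fSpot hV hA (gSpot hV hA t)) t := by
  refine EqvGen.symm _ _ ?_
  exact pSE_equiv hV hA t _ (by
    show pS D n (pSE D n t.1) = pSE D n t.1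
    exact pS_id _ (pSE_fst _))

/-- The face bijection induced by a right exchange. -/
def faceEquiv (hV : D.Valid) (hA : D.AdmitsRight n) : Face D ≃ Face (D.rightExchange n) where
  toFun := Quotient.lift
    (fun s => Quotient.mk (faceSetoid (D.rightExchange n)) (fSpot hV hA s))
    (fun a b h => Quotient.sound (pS_adj_star hV hA h))
  invFun := Quotient.lift
    (fun t => Quotient.mk (faceSetoid D) (gSpot hV hA t))
    (fun a b h => Quotient.sound (pSE_adj_star hV hA h))
  left_inv := by
    refine Quotient.ind (fun s => ?_)
    exact Quotient.sound (gf_spot hV hA s)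
  right_inv := by
    refine Quotient.ind (fun t => ?_)
    exact Quotient.sound (fg_spot hV hA t)

end Core4

end ExchProof
namespace ExchProof
open Diagram Sum Relation

/-- Push a place of `D` away from level `n+1`; vertices `n` and `n+1` are swapped. -/
def pP (D : Diagram) (n : ℕ) : (ℕ × ℕ) ⊕ ℕ → (ℕ × ℕ) ⊕ ℕ
  | Sum.inl (h, k) =>
      if h = n+1 then
        (if k ≤ D.H (n+1) then Sum.inl (n+2, k) else Sum.inl (n, k + D.I n - D.O n))
      else Sum.inl (h, k)
  | Sum.inr v => Sum.inr (swapAt n v)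

/-- Push a place of `D.rightExchange n` away from level `n+1`. -/
def pPE (D : Diagram) (n : ℕ) : (ℕ × ℕ) ⊕ ℕ → (ℕ × ℕ) ⊕ ℕ
  | Sum.inl (h, k) =>
      if h = n+1 then
        (if k ≤ D.H (n+1) + D.I n - D.O n then Sum.inl (n, k)
         else Sum.inl (n+2, k + D.O n - D.I n))
      else Sum.inl (h, k)
  | Sum.inr v => Sum.inr (swapAt n v)

section Core5

variable {D : Diagram} {n : ℕ}

lemma pP_id (h k : ℕ) (hne : h ≠ n+1) : pP D n (inl (h, k)) = inl (h, k) := by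
  simp only [pP]; rw [if_neg hne]

lemma pPE_id (h k : ℕ) (hne : h ≠ n+1) : pPE D n (inl (h, k)) = inl (h, k) := by
  simp only [pPE]; rw [if_neg hne]

lemma swap_swap (v : ℕ) : swapAt n (swapAt n v) = v := by
  unfold swapAt; split_ifs <;> omega

lemma swap_lt (hn1 : n + 1 < D.N) {v : ℕ} (hv : v < D.N) : swapAt n v < D.N := by
  unfold swapAt; split_ifs <;> omega

lemma pP_validE (hV : D.Valid) (hA : D.AdmitsRight n) (x : (ℕ × ℕ) ⊕ ℕ)
    (hx : ValidPlace D x) : ValidPlace (D.rightExchange n) (pP D n x) := by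
  obtain ⟨hn1, hab⟩ := hA
  have hWa := hV n (by omega)
  have hWb := hV (n+1) hn1
  have hw1 : D.W (n+1) = D.W n + ((D.O n : ℤ) - (D.I n : ℤ)) := by
    rw [show D.W (n+1) = D.W n + D.Δ n from by simp [Diagram.W]]; rfl
  have hw2 : D.W (n+2) = D.W (n+1) + ((D.O (n+1) : ℤ) - (D.I (n+1) : ℤ)) := by
    rw [show D.W (n+2) = D.W (n+1) + D.Δ (n+1) from by simp [Diagram.W]]; rfl
  push_cast at hWa hWb
  rcases x with ⟨h, k⟩ | v
  · obtain ⟨h1, h2, h3⟩ := hx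
    simp only [pP]
    split_ifs with hh hk
    · subst hh
      exact ⟨by show n+2 ≤ D.N; omega, h2,
        by show (k:ℤ) ≤ (D.rightExchange n).W (n+2); rw [rxW, if_neg (by omega)]; omega⟩
    · subst hh
      exact ⟨by show n ≤ D.N; omega, by omega,
        by show ((k + D.I n - D.O n : ℕ):ℤ) ≤ (D.rightExchange n).W n
           rw [rxW, if_neg (by omega)]; omega⟩
    · exact ⟨h1, h2, by show (k:ℤ) ≤ (D.rightExchange n).W h; rw [rxW, if_neg hh]; exact h3⟩
  · exact swap_lt hn1 hx

lemma pPE_validD (hV : D.Valid) (hA : D.AdmitsRight n) (x : (ℕ × ℕ) ⊕ ℕ)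
    (hx : ValidPlace (D.rightExchange n) x) : ValidPlace D (pPE D n x) := by
  obtain ⟨hn1, hab⟩ := hA
  have hWa := hV n (by omega)
  have hWb := hV (n+1) hn1
  have hw1 : D.W (n+1) = D.W n + ((D.O n : ℤ) - (D.I n : ℤ)) := by
    rw [show D.W (n+1) = D.W n + D.Δ n from by simp [Diagram.W]]; rfl
  have hw2 : D.W (n+2) = D.W (n+1) + ((D.O (n+1) : ℤ) - (D.I (n+1) : ℤ)) := by
    rw [show D.W (n+2) = D.W (n+1) + D.Δ (n+1) from by simp [Diagram.W]]; rfl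
  push_cast at hWa hWb
  rcases x with ⟨h, k⟩ | v
  · obtain ⟨h1, h2, h3⟩ := hx
    rw [show (D.rightExchange n).N = D.N from rfl] at h1
    rw [rxW] at h3
    simp only [pPE]
    split_ifs with hh hk
    · subst hh
      rw [if_pos rfl, show D.Δ (n+1) = (D.O (n+1) : ℤ) - (D.I (n+1) : ℤ) from rfl] at h3
      exact ⟨by omega, h2, by show (k:ℤ) ≤ D.W n; omega⟩
    · subst hh
      rw [if_pos rfl, show D.Δ (n+1) = (D.O (n+1) : ℤ) - (D.I (n+1) : ℤ) from rfl] at h3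
      exact ⟨by omega, by omega, by show ((k + D.O n - D.I n : ℕ):ℤ) ≤ D.W (n+2); omega⟩
    · rw [if_neg hh] at h3
      exact ⟨h1, h2, h3⟩
  · exact swap_lt (by exact hn1) hx

lemma pP_vertex (v : ℕ) : pP D n (inr v) = inr (swapAt n v) := rfl
lemma pPE_vertex (v : ℕ) : pPE D n (inr v) = inr (swapAt n v) := rfl

end Core5

end ExchProof
namespace ExchProof
open Diagram Sum Relation

section Core6

variable {D : Diagram} {n : ℕ}

lemma pP_adj_vx (hV : D.Valid) (hA : D.AdmitsRight n) (h1 k1 v : ℕ)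
    (hpv : ValidPlace D (inl (h1, k1))) (hqv : ValidPlace D (inr v))
    (hcond : (h1 = v ∧ D.H v + 1 ≤ k1 ∧ k1 ≤ D.H v + D.I v) ∨
             (h1 = v + 1 ∧ D.H v + 1 ≤ k1 ∧ k1 ≤ D.H v + D.O v))
    (x y : Place (D.rightExchange n)) (hx : x.1 = pP D n (inl (h1, k1)))
    (hy : y.1 = pP D n (inr v)) :
    Relation.EqvGen (PlaceAdj (D.rightExchange n)) x y := by
  obtain ⟨hn1, hab⟩ := hA
  have hWa := hV n (by omega)
  have hWb := hV (n+1) hn1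
  have hw1 : D.W (n+1) = D.W n + ((D.O n : ℤ) - (D.I n : ℤ)) := by
    rw [show D.W (n+1) = D.W n + D.Δ n from by simp [Diagram.W]]; rfl
  have hw2 : D.W (n+2) = D.W (n+1) + ((D.O (n+1) : ℤ) - (D.I (n+1) : ℤ)) := by
    rw [show D.W (n+2) = D.W (n+1) + D.Δ (n+1) from by simp [Diagram.W]]; rfl
  push_cast at hWa hWb
  have hdd1 : D.Δ (n+1) = (D.O (n+1) : ℤ) - (D.I (n+1) : ℤ) := rfl
  have eHn : (D.rightExchange n).H n = D.H (n+1) + D.I n - D.O n := rxH_n D n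
  have eHn1 : (D.rightExchange n).H (n+1) = D.H n := rxH_n1 D n
  have eIn : (D.rightExchange n).I n = D.I (n+1) := rxI_n D n
  have eIn1 : (D.rightExchange n).I (n+1) = D.I n := rxI_n1 D n
  have eOn : (D.rightExchange n).O n = D.O (n+1) := rxO_n D n
  have eOn1 : (D.rightExchange n).O (n+1) = D.O n := rxO_n1 D n
  have eDn1 : (D.rightExchange n).Δ (n+1) = (D.O n : ℤ) - (D.I n : ℤ) := by
    rw [rxD_n1]; rfl
  obtain ⟨hpN, hp1, hpW⟩ := hpv
  have hqN : v < D.N := hqv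
  rw [pP_vertex] at hy
  rcases hcond with ⟨he, hlo, hhi⟩ | ⟨he, hlo, hhi⟩
  · subst he
    -- input edge of vertex h1
    by_cases hv : h1 = n
    · subst hv
      -- h1 now plays the role of n
      rw [show swapAt h1 h1 = h1+1 from by unfold swapAt; rw [if_pos rfl]] at hy
      rw [pP_id _ _ (by omega)] at hx
      have hvX : ValidPlace (D.rightExchange h1) (inl (h1, k1)) :=
        ⟨by show h1 ≤ D.N; omega, hp1,
         by show (k1:ℤ) ≤ (D.rightExchange h1).W h1; rw [rxW, if_neg (by omega)]; exact hpW⟩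
      have hvM : ValidPlace (D.rightExchange h1) (inl (h1+1, k1)) :=
        ⟨by show h1+1 ≤ D.N; omega, hp1,
         by show (k1:ℤ) ≤ (D.rightExchange h1).W (h1+1); rw [rxW, if_pos rfl, hdd1]; omega⟩
      have hvY : ValidPlace (D.rightExchange h1) (inr (h1+1)) := by show h1+1 < D.N; omega
      refine eqv_congr (Subtype.ext hx) (Subtype.ext hy)
        (x' := ⟨inl (h1, k1), hvX⟩) (y' := ⟨inr (h1+1), hvY⟩)
        (EqvGen.trans _ (⟨inl (h1+1, k1), hvM⟩ : Place (D.rightExchange h1)) _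
          (EqvGen.rel _ _ ?_) (EqvGen.rel _ _ ?_))
      · exact ⟨rfl, by show h1 < D.N; omega,
          Or.inl ⟨rfl, by show k1 ≤ (D.rightExchange h1).H h1; rw [eHn]; omega⟩⟩
      · exact Or.inl ⟨rfl,
          by show (D.rightExchange h1).H (h1+1) + 1 ≤ k1; rw [eHn1]; omega,
          by show k1 ≤ (D.rightExchange h1).H (h1+1) + (D.rightExchange h1).I (h1+1)
             rw [eHn1, eIn1]; omega⟩
    · by_cases hv1 : h1 = n + 1
      · subst hv1
        -- edge is an input of vertex n+1
        rw [show swapAt n (n+1) = n from by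
          unfold swapAt; rw [if_neg (by omega), if_pos rfl]] at hy
        rw [show pP D n (inl (n+1, k1)) = inl (n, k1 + D.I n - D.O n) from by
          simp only [pP, if_true]; rw [if_neg (by omega)]] at hx
        have hvX : ValidPlace (D.rightExchange n) (inl (n, k1 + D.I n - D.O n)) :=
          ⟨by show n ≤ D.N; omega, by omega,
           by show ((k1 + D.I n - D.O n : ℕ):ℤ) ≤ (D.rightExchange n).W n
              rw [rxW, if_neg (by omega)]; omega⟩
        have hvY : ValidPlace (D.rightExchange n) (inr n) := by show n < D.N; omega
        refine eqv_congr (Subtype.ext hx) (Subtype.ext hy)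
          (x' := ⟨inl (n, k1 + D.I n - D.O n), hvX⟩) (y' := ⟨inr n, hvY⟩) (EqvGen.rel _ _ ?_)
        exact Or.inl ⟨rfl,
          by show (D.rightExchange n).H n + 1 ≤ k1 + D.I n - D.O n; rw [eHn]; omega,
          by show k1 + D.I n - D.O n ≤ (D.rightExchange n).H n + (D.rightExchange n).I n
             rw [eHn, eIn]; omega⟩
      · -- ordinary vertex
        rw [show swapAt n h1 = h1 from by unfold swapAt; rw [if_neg hv, if_neg hv1]] at hy
        rw [pP_id _ _ (by omega)] at hx
        have hvX : ValidPlace (D.rightExchange n) (inl (h1, k1)) :=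
          ⟨by show h1 ≤ D.N; omega, hp1,
           by show (k1:ℤ) ≤ (D.rightExchange n).W h1; rw [rxW, if_neg (by omega)]; exact hpW⟩
        have hvY : ValidPlace (D.rightExchange n) (inr h1) := by show h1 < D.N; omega
        refine eqv_congr (Subtype.ext hx) (Subtype.ext hy)
          (x' := ⟨inl (h1, k1), hvX⟩) (y' := ⟨inr h1, hvY⟩) (EqvGen.rel _ _ ?_)
        exact Or.inl ⟨rfl,
          by show (D.rightExchange n).H h1 + 1 ≤ k1; rw [rxH D n h1 hv hv1]; omega,
          by show k1 ≤ (D.rightExchange n).H h1 + (D.rightExchange n).I h1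
             rw [rxH D n h1 hv hv1, rxI D n h1 hv hv1]; omega⟩
  · subst he
    -- output edge of vertex v
    by_cases hv : v = n
    · subst hv
      -- v now plays the role of n
      rw [show swapAt v v = v+1 from by unfold swapAt; rw [if_pos rfl]] at hy
      rw [show pP D v (inl (v+1, k1)) = inl (v+2, k1) from by
        simp only [pP, if_true]; rw [if_pos (by omega)]] at hx
      have hvX : ValidPlace (D.rightExchange v) (inl (v+2, k1)) :=
        ⟨by show v+2 ≤ D.N; omega, hp1,
         by show (k1:ℤ) ≤ (D.rightExchange v).W (v+2); rw [rxW, if_neg (by omega)]; omega⟩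
      have hvY : ValidPlace (D.rightExchange v) (inr (v+1)) := by show v+1 < D.N; omega
      refine eqv_congr (Subtype.ext hx) (Subtype.ext hy)
        (x' := ⟨inl (v+2, k1), hvX⟩) (y' := ⟨inr (v+1), hvY⟩) (EqvGen.rel _ _ ?_)
      exact Or.inr ⟨rfl,
        by show (D.rightExchange v).H (v+1) + 1 ≤ k1; rw [eHn1]; omega,
        by show k1 ≤ (D.rightExchange v).H (v+1) + (D.rightExchange v).O (v+1)
           rw [eHn1, eOn1]; omega⟩
    · by_cases hv1 : v = n + 1
      · subst hv1
        -- edge is an output of vertex n+1, at level n+2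
        rw [show swapAt n (n+1) = n from by
          unfold swapAt; rw [if_neg (by omega), if_pos rfl]] at hy
        rw [pP_id _ _ (by omega)] at hx
        have hvX : ValidPlace (D.rightExchange n) (inl (n+1+1, k1)) :=
          ⟨by show n+2 ≤ D.N; omega, hp1,
           by show (k1:ℤ) ≤ (D.rightExchange n).W (n+2); rw [rxW, if_neg (by omega)]; exact hpW⟩
        have hvM : ValidPlace (D.rightExchange n) (inl (n+1, k1 + D.I n - D.O n)) :=
          ⟨by show n+1 ≤ D.N; omega, by omega,
           by show ((k1 + D.I n - D.O n : ℕ):ℤ) ≤ (D.rightExchange n).W (n+1)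
              rw [rxW, if_pos rfl, hdd1]; omega⟩
        have hvY : ValidPlace (D.rightExchange n) (inr n) := by show n < D.N; omega
        refine eqv_congr (Subtype.ext hx) (Subtype.ext hy)
          (x' := ⟨inl (n+1+1, k1), hvX⟩) (y' := ⟨inr n, hvY⟩) ?_
        have r1 : PlaceAdj (D.rightExchange n)
            ⟨inl (n+1, k1 + D.I n - D.O n), hvM⟩ ⟨inl (n+1+1, k1), hvX⟩ :=
          ⟨rfl, by show n+1 < D.N; omega,
           Or.inr ⟨by show (k1:ℤ) = ((k1 + D.I n - D.O n : ℕ):ℤ) + (D.rightExchange n).Δ (n+1); rw [eDn1]; omega,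
             by show (D.rightExchange n).H (n+1) + (D.rightExchange n).I (n+1) + 1 ≤ k1 + D.I n - D.O n
                rw [eHn1, eIn1]; omega⟩⟩
        have r2 : PlaceAdj (D.rightExchange n)
            ⟨inr n, hvY⟩ ⟨inl (n+1, k1 + D.I n - D.O n), hvM⟩ :=
          Or.inr ⟨rfl,
            by show (D.rightExchange n).H n + 1 ≤ k1 + D.I n - D.O n; rw [eHn]; omega,
            by show k1 + D.I n - D.O n ≤ (D.rightExchange n).H n + (D.rightExchange n).O n
               rw [eHn, eOn]; omega⟩
        exact EqvGen.trans _ _ _ (EqvGen.symm _ _ (EqvGen.rel _ _ r1))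
          (EqvGen.symm _ _ (EqvGen.rel _ _ r2))
      · rw [show swapAt n v = v from by unfold swapAt; rw [if_neg hv, if_neg hv1]] at hy
        rw [pP_id _ _ (by omega)] at hx
        have hvX : ValidPlace (D.rightExchange n) (inl (v+1, k1)) :=
          ⟨by show v+1 ≤ D.N; omega, hp1,
           by show (k1:ℤ) ≤ (D.rightExchange n).W (v+1); rw [rxW, if_neg (by omega)]; exact hpW⟩
        have hvY : ValidPlace (D.rightExchange n) (inr v) := by show v < D.N; omega
        refine eqv_congr (Subtype.ext hx) (Subtype.ext hy)
          (x' := ⟨inl (v+1, k1), hvX⟩) (y' := ⟨inr v, hvY⟩) (EqvGen.rel _ _ ?_)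
        exact Or.inr ⟨rfl,
          by show (D.rightExchange n).H v + 1 ≤ k1; rw [rxH D n v hv hv1]; omega,
          by show k1 ≤ (D.rightExchange n).H v + (D.rightExchange n).O v
             rw [rxH D n v hv hv1, rxO D n v hv hv1]; omega⟩

end Core6

end ExchProof
namespace ExchProof
open Diagram Sum Relation

section Core7

variable {D : Diagram} {n : ℕ}

lemma pP_adj (hV : D.Valid) (hA : D.AdmitsRight n) (p q : Place D) (h : PlaceAdj D p q)
    (x y : Place (D.rightExchange n)) (hx : x.1 = pP D n p.1) (hy : y.1 = pP D n q.1) :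
    Relation.EqvGen (PlaceAdj (D.rightExchange n)) x y := by
  obtain ⟨pv, hpv⟩ := p
  obtain ⟨qv, hqv⟩ := q
  dsimp only at hx hy
  rcases pv with ⟨h1, k1⟩ | v1 <;> rcases qv with ⟨h2, k2⟩ | v2
  case inl.inr => exact pP_adj_vx hV hA h1 k1 v2 hpv hqv h x y hx hy
  case inr.inl =>
    exact EqvGen.symm _ _ (pP_adj_vx hV hA h2 k2 v1 hqv hpv h y x hy hx)
  case inr.inr => exact h.elim
  case inl.inl =>
  obtain ⟨hn1, hab⟩ := hA
  have hWa := hV n (by omega)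
  have hWb := hV (n+1) hn1
  have hw1 : D.W (n+1) = D.W n + ((D.O n : ℤ) - (D.I n : ℤ)) := by
    rw [show D.W (n+1) = D.W n + D.Δ n from by simp [Diagram.W]]; rfl
  have hw2 : D.W (n+2) = D.W (n+1) + ((D.O (n+1) : ℤ) - (D.I (n+1) : ℤ)) := by
    rw [show D.W (n+2) = D.W (n+1) + D.Δ (n+1) from by simp [Diagram.W]]; rfl
  push_cast at hWa hWb
  have hddn : D.Δ n = (D.O n : ℤ) - (D.I n : ℤ) := rfl
  have hdd1 : D.Δ (n+1) = (D.O (n+1) : ℤ) - (D.I (n+1) : ℤ) := rfl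
  have eHn : (D.rightExchange n).H n = D.H (n+1) + D.I n - D.O n := rxH_n D n
  have eHn1 : (D.rightExchange n).H (n+1) = D.H n := rxH_n1 D n
  have eIn : (D.rightExchange n).I n = D.I (n+1) := rxI_n D n
  have eIn1 : (D.rightExchange n).I (n+1) = D.I n := rxI_n1 D n
  have eDn : (D.rightExchange n).Δ n = (D.O (n+1) : ℤ) - (D.I (n+1) : ℤ) := by
    rw [rxD_n]; rfl
  have eDn1 : (D.rightExchange n).Δ (n+1) = (D.O n : ℤ) - (D.I n : ℤ) := by
    rw [rxD_n1]; rfl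
  obtain ⟨e1, e2, e3⟩ := h
  subst e1
  obtain ⟨hpN, hp1, hpW⟩ := hpv
  obtain ⟨hqN, hq1, hqW⟩ := hqv
  by_cases hm : h1 = n
  · subst hm
    rw [pP_id _ _ (by omega)] at hx
    have hvX : ValidPlace (D.rightExchange h1) (inl (h1, k1)) :=
      ⟨by show h1 ≤ D.N; omega, hp1,
       by show (k1:ℤ) ≤ (D.rightExchange h1).W h1; rw [rxW, if_neg (by omega)]; exact hpW⟩
    rcases e3 with ⟨hk, hj⟩ | ⟨hk, hj⟩
    · rw [show pP D h1 (inl (h1+1, k2)) = inl (h1+2, k2) from by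
        simp only [pP, if_true]; rw [if_pos (by omega)]] at hy
      have hvM : ValidPlace (D.rightExchange h1) (inl (h1+1, k1)) :=
        ⟨by show h1+1 ≤ D.N; omega, hp1,
         by show (k1:ℤ) ≤ (D.rightExchange h1).W (h1+1); rw [rxW, if_pos rfl, hdd1]; omega⟩
      have hvY : ValidPlace (D.rightExchange h1) (inl (h1+2, k2)) :=
        ⟨by show h1+2 ≤ D.N; omega, hq1,
         by show (k2:ℤ) ≤ (D.rightExchange h1).W (h1+2); rw [rxW, if_neg (by omega)]; omega⟩
      refine eqv_congr (Subtype.ext hx) (Subtype.ext hy)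
        (x' := ⟨inl (h1, k1), hvX⟩) (y' := ⟨inl (h1+2, k2), hvY⟩)
        (EqvGen.trans _ (⟨inl (h1+1, k1), hvM⟩ : Place (D.rightExchange h1)) _
          (EqvGen.rel _ _ ?_) (EqvGen.rel _ _ ?_))
      · exact ⟨rfl, by show h1 < D.N; omega,
          Or.inl ⟨rfl, by show k1 ≤ (D.rightExchange h1).H h1; rw [eHn]; omega⟩⟩
      · exact ⟨rfl, by show h1+1 < D.N; omega,
          Or.inl ⟨by show k2 = k1; omega,
            by show k1 ≤ (D.rightExchange h1).H (h1+1); rw [eHn1]; omega⟩⟩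
    · rw [hddn] at hk
      by_cases hkb : k2 ≤ D.H (h1+1)
      · rw [show pP D h1 (inl (h1+1, k2)) = inl (h1+2, k2) from by
          simp only [pP, if_true]; rw [if_pos hkb]] at hy
        have hvM : ValidPlace (D.rightExchange h1) (inl (h1+1, k1)) :=
          ⟨by show h1+1 ≤ D.N; omega, hp1,
           by show (k1:ℤ) ≤ (D.rightExchange h1).W (h1+1); rw [rxW, if_pos rfl, hdd1]; omega⟩
        have hvY : ValidPlace (D.rightExchange h1) (inl (h1+2, k2)) :=
          ⟨by show h1+2 ≤ D.N; omega, hq1,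
           by show (k2:ℤ) ≤ (D.rightExchange h1).W (h1+2); rw [rxW, if_neg (by omega)]; omega⟩
        refine eqv_congr (Subtype.ext hx) (Subtype.ext hy)
          (x' := ⟨inl (h1, k1), hvX⟩) (y' := ⟨inl (h1+2, k2), hvY⟩)
          (EqvGen.trans _ (⟨inl (h1+1, k1), hvM⟩ : Place (D.rightExchange h1)) _
            (EqvGen.rel _ _ ?_) (EqvGen.rel _ _ ?_))
        · exact ⟨rfl, by show h1 < D.N; omega,
            Or.inl ⟨rfl, by show k1 ≤ (D.rightExchange h1).H h1; rw [eHn]; omega⟩⟩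
        · exact ⟨rfl, by show h1+1 < D.N; omega,
            Or.inr ⟨by show (k2:ℤ) = (k1:ℤ) + (D.rightExchange h1).Δ (h1+1); rw [eDn1]; omega,
              by show (D.rightExchange h1).H (h1+1) + (D.rightExchange h1).I (h1+1) + 1 ≤ k1
                 rw [eHn1, eIn1]; omega⟩⟩
      · rw [show pP D h1 (inl (h1+1, k2)) = inl (h1, k1) from by
          simp only [pP, if_true]; rw [if_neg hkb]
          exact congrArg _ (congrArg _ (by omega))] at hy
        exact eqv_congr (Subtype.ext hx) (Subtype.ext hy)
          (x' := ⟨inl (h1, k1), hvX⟩) (y' := ⟨inl (h1, k1), hvX⟩) (EqvGen.refl _)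
  · by_cases hm1 : h1 = n + 1
    · subst hm1
      rw [pP_id _ _ (by omega)] at hy
      have hvY : ValidPlace (D.rightExchange n) (inl (n+1+1, k2)) :=
        ⟨by show n+2 ≤ D.N; omega, hq1,
         by show (k2:ℤ) ≤ (D.rightExchange n).W (n+2); rw [rxW, if_neg (by omega)]; exact hqW⟩
      rcases e3 with ⟨hk, hj⟩ | ⟨hk, hj⟩
      · rw [show pP D n (inl (n+1, k1)) = inl (n+1+1, k2) from by
          simp only [pP, if_true]; rw [if_pos hj]
          exact congrArg _ (congrArg _ hk.symm)] at hx
        exact eqv_congr (Subtype.ext hx) (Subtype.ext hy)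
          (x' := ⟨inl (n+1+1, k2), hvY⟩) (y' := ⟨inl (n+1+1, k2), hvY⟩) (EqvGen.refl _)
      · rw [hdd1] at hk
        rw [show pP D n (inl (n+1, k1)) = inl (n, k1 + D.I n - D.O n) from by
          simp only [pP, if_true]; rw [if_neg (by omega)]] at hx
        have hvX : ValidPlace (D.rightExchange n) (inl (n, k1 + D.I n - D.O n)) :=
          ⟨by show n ≤ D.N; omega, by omega,
           by show ((k1 + D.I n - D.O n : ℕ):ℤ) ≤ (D.rightExchange n).W n
              rw [rxW, if_neg (by omega)]; omega⟩
        have hvM : ValidPlace (D.rightExchange n)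
            (inl (n+1, k1 + D.I n - D.O n + D.O (n+1) - D.I (n+1))) :=
          ⟨by show n+1 ≤ D.N; omega, by omega,
           by show ((k1 + D.I n - D.O n + D.O (n+1) - D.I (n+1) : ℕ):ℤ) ≤ (D.rightExchange n).W (n+1)
              rw [rxW, if_pos rfl, hdd1]; omega⟩
        refine eqv_congr (Subtype.ext hx) (Subtype.ext hy)
          (x' := ⟨inl (n, k1 + D.I n - D.O n), hvX⟩) (y' := ⟨inl (n+1+1, k2), hvY⟩)
          (EqvGen.trans _ (⟨inl (n+1, k1 + D.I n - D.O n + D.O (n+1) - D.I (n+1)), hvM⟩ :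
            Place (D.rightExchange n)) _ (EqvGen.rel _ _ ?_) (EqvGen.rel _ _ ?_))
        · exact ⟨rfl, by show n < D.N; omega,
            Or.inr ⟨by show ((k1 + D.I n - D.O n + D.O (n+1) - D.I (n+1) : ℕ):ℤ) = ((k1 + D.I n - D.O n : ℕ):ℤ) + (D.rightExchange n).Δ n; rw [eDn]; omega,
              by show (D.rightExchange n).H n + (D.rightExchange n).I n + 1 ≤ k1 + D.I n - D.O n
                 rw [eHn, eIn]; omega⟩⟩
        · exact ⟨rfl, by show n+1 < D.N; omega,
            Or.inr ⟨by show (k2:ℤ) = ((k1 + D.I n - D.O n + D.O (n+1) - D.I (n+1) : ℕ):ℤ) + (D.rightExchange n).Δ (n+1); rw [eDn1]; omega,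
              by show (D.rightExchange n).H (n+1) + (D.rightExchange n).I (n+1) + 1 ≤ k1 + D.I n - D.O n + D.O (n+1) - D.I (n+1)
                 rw [eHn1, eIn1]; omega⟩⟩
    · rw [pP_id _ _ (by omega)] at hx
      rw [pP_id _ _ (by omega : h1+1 ≠ n+1)] at hy
      have hvX : ValidPlace (D.rightExchange n) (inl (h1, k1)) :=
        ⟨by show h1 ≤ D.N; omega, hp1,
         by show (k1:ℤ) ≤ (D.rightExchange n).W h1; rw [rxW, if_neg hm1]; exact hpW⟩
      have hvY : ValidPlace (D.rightExchange n) (inl (h1+1, k2)) :=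
        ⟨by show h1+1 ≤ D.N; omega, hq1,
         by show (k2:ℤ) ≤ (D.rightExchange n).W (h1+1); rw [rxW, if_neg (by omega)]; exact hqW⟩
      refine eqv_congr (Subtype.ext hx) (Subtype.ext hy)
        (x' := ⟨inl (h1, k1), hvX⟩) (y' := ⟨inl (h1+1, k2), hvY⟩) (EqvGen.rel _ _ ?_)
      refine ⟨rfl, by show h1 < D.N; omega, ?_⟩
      rcases e3 with ⟨hk, hj⟩ | ⟨hk, hj⟩
      · exact Or.inl ⟨hk, by show k1 ≤ (D.rightExchange n).H h1; rw [rxH D n h1 hm hm1]; omega⟩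
      · exact Or.inr ⟨by show (k2:ℤ) = (k1:ℤ) + (D.rightExchange n).Δ h1; rw [rxD D n h1 hm hm1]; exact hk,
          by show (D.rightExchange n).H h1 + (D.rightExchange n).I h1 + 1 ≤ k1
             rw [rxH D n h1 hm hm1, rxI D n h1 hm hm1]; omega⟩

end Core7

end ExchProof
namespace ExchProof
open Diagram Sum Relation

section Core8

variable {D : Diagram} {n : ℕ}

lemma pPE_adj_vx (hV : D.Valid) (hA : D.AdmitsRight n) (h1 k1 v : ℕ)
    (hpv : ValidPlace (D.rightExchange n) (inl (h1, k1)))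
    (hqv : ValidPlace (D.rightExchange n) (inr v))
    (hcond : (h1 = v ∧ (D.rightExchange n).H v + 1 ≤ k1 ∧
                k1 ≤ (D.rightExchange n).H v + (D.rightExchange n).I v) ∨
             (h1 = v + 1 ∧ (D.rightExchange n).H v + 1 ≤ k1 ∧
                k1 ≤ (D.rightExchange n).H v + (D.rightExchange n).O v))
    (x y : Place D) (hx : x.1 = pPE D n (inl (h1, k1)))
    (hy : y.1 = pPE D n (inr v)) :
    Relation.EqvGen (PlaceAdj D) x y := by
  obtain ⟨hn1, hab⟩ := hA
  have hWa := hV n (by omega)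
  have hWb := hV (n+1) hn1
  have hw1 : D.W (n+1) = D.W n + ((D.O n : ℤ) - (D.I n : ℤ)) := by
    rw [show D.W (n+1) = D.W n + D.Δ n from by simp [Diagram.W]]; rfl
  have hw2 : D.W (n+2) = D.W (n+1) + ((D.O (n+1) : ℤ) - (D.I (n+1) : ℤ)) := by
    rw [show D.W (n+2) = D.W (n+1) + D.Δ (n+1) from by simp [Diagram.W]]; rfl
  push_cast at hWa hWb
  have hddn : D.Δ n = (D.O n : ℤ) - (D.I n : ℤ) := rfl
  have hdd1 : D.Δ (n+1) = (D.O (n+1) : ℤ) - (D.I (n+1) : ℤ) := rfl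
  have eHn : (D.rightExchange n).H n = D.H (n+1) + D.I n - D.O n := rxH_n D n
  have eHn1 : (D.rightExchange n).H (n+1) = D.H n := rxH_n1 D n
  have eIn : (D.rightExchange n).I n = D.I (n+1) := rxI_n D n
  have eIn1 : (D.rightExchange n).I (n+1) = D.I n := rxI_n1 D n
  have eOn : (D.rightExchange n).O n = D.O (n+1) := rxO_n D n
  have eOn1 : (D.rightExchange n).O (n+1) = D.O n := rxO_n1 D n
  obtain ⟨hpN, hp1, hpW⟩ := hpv
  have hqN : v < D.N := hqv
  rw [show (D.rightExchange n).N = D.N from rfl] at hpN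
  rw [rxW] at hpW
  rw [pPE_vertex] at hy
  rcases hcond with ⟨he, hlo, hhi⟩ | ⟨he, hlo, hhi⟩
  · subst he
    by_cases hv : h1 = n
    · subst hv
      -- input edge of the exchanged vertex at height h1 (= n) in E
      rw [eHn] at hlo hhi
      rw [eIn] at hhi
      rw [if_neg (by omega)] at hpW
      rw [show swapAt h1 h1 = h1+1 from by unfold swapAt; rw [if_pos rfl]] at hy
      rw [pPE_id _ _ (by omega)] at hx
      have hvX : ValidPlace D (inl (h1, k1)) := ⟨by omega, hp1, hpW⟩
      have hvM : ValidPlace D (inl (h1+1, k1 + D.O h1 - D.I h1)) :=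
        ⟨by omega, by omega, by show ((k1 + D.O h1 - D.I h1 : ℕ):ℤ) ≤ D.W (h1+1); omega⟩
      have hvY : ValidPlace D (inr (h1+1)) := by show h1+1 < D.N; omega
      refine eqv_congr (Subtype.ext hx) (Subtype.ext hy)
        (x' := ⟨inl (h1, k1), hvX⟩) (y' := ⟨inr (h1+1), hvY⟩)
        (EqvGen.trans _ (⟨inl (h1+1, k1 + D.O h1 - D.I h1), hvM⟩ : Place D) _
          (EqvGen.rel _ _ ?_) (EqvGen.rel _ _ ?_))
      · exact ⟨rfl, by omega,
          Or.inr ⟨by show ((k1 + D.O h1 - D.I h1 : ℕ):ℤ) = (k1:ℤ) + D.Δ h1; rw [hddn]; omega,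
            by show D.H h1 + D.I h1 + 1 ≤ k1; omega⟩⟩
      · exact Or.inl ⟨rfl,
          by show D.H (h1+1) + 1 ≤ k1 + D.O h1 - D.I h1; omega,
          by show k1 + D.O h1 - D.I h1 ≤ D.H (h1+1) + D.I (h1+1); omega⟩
    · by_cases hv1 : h1 = n + 1
      · subst hv1
        -- input edge of the exchanged vertex at height n+1 in E (the old vertex n)
        rw [eHn1] at hlo hhi
        rw [eIn1] at hhi
        rw [if_pos rfl, hdd1] at hpW
        rw [show swapAt n (n+1) = n from by
          unfold swapAt; rw [if_neg (by omega), if_pos rfl]] at hy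
        rw [show pPE D n (inl (n+1, k1)) = inl (n, k1) from by
          simp only [pPE, if_true]; rw [if_pos (by omega)]] at hx
        have hvX : ValidPlace D (inl (n, k1)) :=
          ⟨by omega, hp1, by show (k1:ℤ) ≤ D.W n; omega⟩
        have hvY : ValidPlace D (inr n) := by show n < D.N; omega
        refine eqv_congr (Subtype.ext hx) (Subtype.ext hy)
          (x' := ⟨inl (n, k1), hvX⟩) (y' := ⟨inr n, hvY⟩) (EqvGen.rel _ _ ?_)
        exact Or.inl ⟨rfl, by show D.H n + 1 ≤ k1; omega, by show k1 ≤ D.H n + D.I n; omega⟩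
      · rw [rxH D n h1 hv hv1] at hlo hhi
        rw [rxI D n h1 hv hv1] at hhi
        rw [if_neg hv1] at hpW
        rw [show swapAt n h1 = h1 from by unfold swapAt; rw [if_neg hv, if_neg hv1]] at hy
        rw [pPE_id _ _ hv1] at hx
        have hvX : ValidPlace D (inl (h1, k1)) := ⟨by omega, hp1, hpW⟩
        have hvY : ValidPlace D (inr h1) := by show h1 < D.N; omega
        refine eqv_congr (Subtype.ext hx) (Subtype.ext hy)
          (x' := ⟨inl (h1, k1), hvX⟩) (y' := ⟨inr h1, hvY⟩) (EqvGen.rel _ _ ?_)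
        exact Or.inl ⟨rfl, hlo, hhi⟩
  · subst he
    by_cases hv : v = n
    · subst hv
      -- output edge at the middle level of E of the vertex at height v (= n)
      rw [eHn] at hlo hhi
      rw [eOn] at hhi
      rw [if_pos rfl, hdd1] at hpW
      rw [show swapAt v v = v+1 from by unfold swapAt; rw [if_pos rfl]] at hy
      rw [show pPE D v (inl (v+1, k1)) = inl (v+2, k1 + D.O v - D.I v) from by
        simp only [pPE, if_true]; rw [if_neg (by omega)]] at hx
      have hvX : ValidPlace D (inl (v+2, k1 + D.O v - D.I v)) :=
        ⟨by omega, by omega, by show ((k1 + D.O v - D.I v : ℕ):ℤ) ≤ D.W (v+2); omega⟩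
      have hvY : ValidPlace D (inr (v+1)) := by show v+1 < D.N; omega
      refine eqv_congr (Subtype.ext hx) (Subtype.ext hy)
        (x' := ⟨inl (v+2, k1 + D.O v - D.I v), hvX⟩) (y' := ⟨inr (v+1), hvY⟩)
        (EqvGen.rel _ _ ?_)
      exact Or.inr ⟨rfl,
        by show D.H (v+1) + 1 ≤ k1 + D.O v - D.I v; omega,
        by show k1 + D.O v - D.I v ≤ D.H (v+1) + D.O (v+1); omega⟩
    · by_cases hv1 : v = n + 1
      · subst hv1
        -- output edge (at level n+2 of E) of the old vertex n
        rw [eHn1] at hlo hhi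
        rw [eOn1] at hhi
        rw [if_neg (by omega)] at hpW
        rw [show swapAt n (n+1) = n from by
          unfold swapAt; rw [if_neg (by omega), if_pos rfl]] at hy
        rw [pPE_id _ _ (by omega)] at hx
        have hvX : ValidPlace D (inl (n+1+1, k1)) := ⟨by omega, hp1, hpW⟩
        have hvM : ValidPlace D (inl (n+1, k1)) :=
          ⟨by omega, hp1, by show (k1:ℤ) ≤ D.W (n+1); omega⟩
        have hvY : ValidPlace D (inr n) := by show n < D.N; omega
        refine eqv_congr (Subtype.ext hx) (Subtype.ext hy)
          (x' := ⟨inl (n+1+1, k1), hvX⟩) (y' := ⟨inr n, hvY⟩) ?_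
        have r1 : PlaceAdj D ⟨inr n, hvY⟩ ⟨inl (n+1, k1), hvM⟩ :=
          Or.inr ⟨rfl, by show D.H n + 1 ≤ k1; omega, by show k1 ≤ D.H n + D.O n; omega⟩
        have r2 : PlaceAdj D ⟨inl (n+1, k1), hvM⟩ ⟨inl (n+1+1, k1), hvX⟩ :=
          ⟨rfl, by omega, Or.inl ⟨rfl, by show k1 ≤ D.H (n+1); omega⟩⟩
        exact EqvGen.trans _ _ _ (EqvGen.symm _ _ (EqvGen.rel _ _ r2))
          (EqvGen.symm _ _ (EqvGen.rel _ _ r1))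
      · rw [rxH D n v hv hv1] at hlo hhi
        rw [rxO D n v hv hv1] at hhi
        rw [if_neg (by omega)] at hpW
        rw [show swapAt n v = v from by unfold swapAt; rw [if_neg hv, if_neg hv1]] at hy
        rw [pPE_id _ _ (by omega)] at hx
        have hvX : ValidPlace D (inl (v+1, k1)) := ⟨by omega, hp1, hpW⟩
        have hvY : ValidPlace D (inr v) := by show v < D.N; omega
        refine eqv_congr (Subtype.ext hx) (Subtype.ext hy)
          (x' := ⟨inl (v+1, k1), hvX⟩) (y' := ⟨inr v, hvY⟩) (EqvGen.rel _ _ ?_)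
        exact Or.inr ⟨rfl, hlo, hhi⟩

end Core8

end ExchProof
namespace ExchProof
open Diagram Sum Relation

section Core9

variable {D : Diagram} {n : ℕ}

lemma pPE_adj (hV : D.Valid) (hA : D.AdmitsRight n) (p q : Place (D.rightExchange n))
    (h : PlaceAdj (D.rightExchange n) p q)
    (x y : Place D) (hx : x.1 = pPE D n p.1) (hy : y.1 = pPE D n q.1) :
    Relation.EqvGen (PlaceAdj D) x y := by
  obtain ⟨pv, hpv⟩ := p
  obtain ⟨qv, hqv⟩ := q
  dsimp only at hx hy
  rcases pv with ⟨h1, k1⟩ | v1 <;> rcases qv with ⟨h2, k2⟩ | v2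
  case inl.inr => exact pPE_adj_vx hV hA h1 k1 v2 hpv hqv h x y hx hy
  case inr.inl =>
    exact EqvGen.symm _ _ (pPE_adj_vx hV hA h2 k2 v1 hqv hpv h y x hy hx)
  case inr.inr => exact h.elim
  case inl.inl =>
  obtain ⟨hn1, hab⟩ := hA
  have hWa := hV n (by omega)
  have hWb := hV (n+1) hn1
  have hw1 : D.W (n+1) = D.W n + ((D.O n : ℤ) - (D.I n : ℤ)) := by
    rw [show D.W (n+1) = D.W n + D.Δ n from by simp [Diagram.W]]; rfl
  have hw2 : D.W (n+2) = D.W (n+1) + ((D.O (n+1) : ℤ) - (D.I (n+1) : ℤ)) := by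
    rw [show D.W (n+2) = D.W (n+1) + D.Δ (n+1) from by simp [Diagram.W]]; rfl
  push_cast at hWa hWb
  have hddn : D.Δ n = (D.O n : ℤ) - (D.I n : ℤ) := rfl
  have hdd1 : D.Δ (n+1) = (D.O (n+1) : ℤ) - (D.I (n+1) : ℤ) := rfl
  have eHn : (D.rightExchange n).H n = D.H (n+1) + D.I n - D.O n := rxH_n D n
  have eHn1 : (D.rightExchange n).H (n+1) = D.H n := rxH_n1 D n
  have eIn : (D.rightExchange n).I n = D.I (n+1) := rxI_n D n
  have eIn1 : (D.rightExchange n).I (n+1) = D.I n := rxI_n1 D n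
  have eDn : (D.rightExchange n).Δ n = (D.O (n+1) : ℤ) - (D.I (n+1) : ℤ) := by
    rw [rxD_n]; rfl
  have eDn1 : (D.rightExchange n).Δ (n+1) = (D.O n : ℤ) - (D.I n : ℤ) := by
    rw [rxD_n1]; rfl
  obtain ⟨e1, e2, e3⟩ := h
  subst e1
  obtain ⟨hpN, hp1, hpW⟩ := hpv
  obtain ⟨hqN, hq1, hqW⟩ := hqv
  rw [show (D.rightExchange n).N = D.N from rfl] at hpN hqN e2
  rw [rxW] at hpW hqW
  by_cases hm : h1 = n
  · subst hm
    rw [if_neg (by omega)] at hpW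
    rw [if_pos rfl, hdd1] at hqW
    rw [pPE_id _ _ (by omega)] at hx
    rw [eHn] at e3
    have hvX : ValidPlace D (inl (h1, k1)) := ⟨by omega, hp1, hpW⟩
    rcases e3 with ⟨hk, hj⟩ | ⟨hk, hj⟩
    · rw [show pPE D h1 (inl (h1+1, k2)) = inl (h1, k1) from by
        simp only [pPE, if_true]; rw [if_pos (by omega)]
        exact congrArg _ (congrArg _ (by omega))] at hy
      exact eqv_congr (Subtype.ext hx) (Subtype.ext hy)
        (x' := ⟨inl (h1, k1), hvX⟩) (y' := ⟨inl (h1, k1), hvX⟩) (EqvGen.refl _)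
    · rw [eDn] at hk
      rw [eIn] at hj
      have hvM1 : ValidPlace D (inl (h1+1, k1 + D.O h1 - D.I h1)) :=
        ⟨by omega, by omega, by show ((k1 + D.O h1 - D.I h1 : ℕ):ℤ) ≤ D.W (h1+1); omega⟩
      have r1 : PlaceAdj D ⟨inl (h1, k1), hvX⟩ ⟨inl (h1+1, k1 + D.O h1 - D.I h1), hvM1⟩ :=
        ⟨rfl, by omega,
         Or.inr ⟨by show ((k1 + D.O h1 - D.I h1 : ℕ):ℤ) = (k1:ℤ) + D.Δ h1; rw [hddn]; omega,
           by show D.H h1 + D.I h1 + 1 ≤ k1; omega⟩⟩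
      by_cases hkc : k2 ≤ D.H (h1+1) + D.I h1 - D.O h1
      · -- degenerate wrap under the vertex (O (h1+1) = 0)
        rw [show pPE D h1 (inl (h1+1, k2)) = inl (h1, k2) from by
          simp only [pPE, if_true]; rw [if_pos hkc]] at hy
        have hvY : ValidPlace D (inl (h1, k2)) :=
          ⟨by omega, hq1, by show (k2:ℤ) ≤ D.W h1; omega⟩
        have hvM2 : ValidPlace D (inl (h1+2, k2 + D.O h1 - D.I h1)) :=
          ⟨by omega, by omega, by show ((k2 + D.O h1 - D.I h1 : ℕ):ℤ) ≤ D.W (h1+2); omega⟩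
        have hvM3 : ValidPlace D (inl (h1+1, k2 + D.O h1 - D.I h1)) :=
          ⟨by omega, by omega, by show ((k2 + D.O h1 - D.I h1 : ℕ):ℤ) ≤ D.W (h1+1); omega⟩
        have r2 : PlaceAdj D ⟨inl (h1+1, k1 + D.O h1 - D.I h1), hvM1⟩
            ⟨inl (h1+2, k2 + D.O h1 - D.I h1), hvM2⟩ :=
          ⟨rfl, by omega,
           Or.inr ⟨by show ((k2 + D.O h1 - D.I h1 : ℕ):ℤ) = ((k1 + D.O h1 - D.I h1 : ℕ):ℤ) + D.Δ (h1+1); rw [hdd1]; omega,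
             by show D.H (h1+1) + D.I (h1+1) + 1 ≤ k1 + D.O h1 - D.I h1; omega⟩⟩
        have r3 : PlaceAdj D ⟨inl (h1+1, k2 + D.O h1 - D.I h1), hvM3⟩
            ⟨inl (h1+2, k2 + D.O h1 - D.I h1), hvM2⟩ :=
          ⟨rfl, by omega, Or.inl ⟨rfl, by show k2 + D.O h1 - D.I h1 ≤ D.H (h1+1); omega⟩⟩
        have r4 : PlaceAdj D ⟨inl (h1, k2), hvY⟩ ⟨inl (h1+1, k2 + D.O h1 - D.I h1), hvM3⟩ :=
          ⟨rfl, by omega,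
           Or.inr ⟨by show ((k2 + D.O h1 - D.I h1 : ℕ):ℤ) = (k2:ℤ) + D.Δ h1; rw [hddn]; omega,
             by show D.H h1 + D.I h1 + 1 ≤ k2; omega⟩⟩
        refine eqv_congr (Subtype.ext hx) (Subtype.ext hy)
          (x' := ⟨inl (h1, k1), hvX⟩) (y' := ⟨inl (h1, k2), hvY⟩) ?_
        exact EqvGen.trans _ _ _ (EqvGen.rel _ _ r1)
          (EqvGen.trans _ _ _ (EqvGen.rel _ _ r2)
            (EqvGen.trans _ _ _ (EqvGen.symm _ _ (EqvGen.rel _ _ r3))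
              (EqvGen.symm _ _ (EqvGen.rel _ _ r4))))
      · rw [show pPE D h1 (inl (h1+1, k2)) = inl (h1+2, k2 + D.O h1 - D.I h1) from by
          simp only [pPE, if_true]; rw [if_neg hkc]] at hy
        have hvY : ValidPlace D (inl (h1+2, k2 + D.O h1 - D.I h1)) :=
          ⟨by omega, by omega, by show ((k2 + D.O h1 - D.I h1 : ℕ):ℤ) ≤ D.W (h1+2); omega⟩
        have r2 : PlaceAdj D ⟨inl (h1+1, k1 + D.O h1 - D.I h1), hvM1⟩
            ⟨inl (h1+2, k2 + D.O h1 - D.I h1), hvY⟩ :=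
          ⟨rfl, by omega,
           Or.inr ⟨by show ((k2 + D.O h1 - D.I h1 : ℕ):ℤ) = ((k1 + D.O h1 - D.I h1 : ℕ):ℤ) + D.Δ (h1+1); rw [hdd1]; omega,
             by show D.H (h1+1) + D.I (h1+1) + 1 ≤ k1 + D.O h1 - D.I h1; omega⟩⟩
        exact eqv_congr (Subtype.ext hx) (Subtype.ext hy)
          (x' := ⟨inl (h1, k1), hvX⟩) (y' := ⟨inl (h1+2, k2 + D.O h1 - D.I h1), hvY⟩)
          (EqvGen.trans _ _ _ (EqvGen.rel _ _ r1) (EqvGen.rel _ _ r2))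
  · by_cases hm1 : h1 = n + 1
    · subst hm1
      rw [if_pos rfl, hdd1] at hpW
      rw [if_neg (by omega)] at hqW
      rw [pPE_id _ _ (by omega)] at hy
      rw [eHn1] at e3
      have hvY : ValidPlace D (inl (n+1+1, k2)) := ⟨by omega, hq1, hqW⟩
      rcases e3 with ⟨hk, hj⟩ | ⟨hk, hj⟩
      · rw [show pPE D n (inl (n+1, k1)) = inl (n, k1) from by
          simp only [pPE, if_true]; rw [if_pos (by omega)]] at hx
        have hvX : ValidPlace D (inl (n, k1)) :=
          ⟨by omega, hp1, by show (k1:ℤ) ≤ D.W n; omega⟩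
        have hvM : ValidPlace D (inl (n+1, k1)) :=
          ⟨by omega, hp1, by show (k1:ℤ) ≤ D.W (n+1); omega⟩
        refine eqv_congr (Subtype.ext hx) (Subtype.ext hy)
          (x' := ⟨inl (n, k1), hvX⟩) (y' := ⟨inl (n+1+1, k2), hvY⟩)
          (EqvGen.trans _ (⟨inl (n+1, k1), hvM⟩ : Place D) _
            (EqvGen.rel _ _ ?_) (EqvGen.rel _ _ ?_))
        · exact ⟨rfl, by omega, Or.inl ⟨rfl, by show k1 ≤ D.H n; omega⟩⟩
        · exact ⟨rfl, by omega, Or.inl ⟨by show k2 = k1; omega, by show k1 ≤ D.H (n+1); omega⟩⟩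
      · rw [eDn1] at hk
        rw [eIn1] at hj
        by_cases hkc : k1 ≤ D.H (n+1) + D.I n - D.O n
        · rw [show pPE D n (inl (n+1, k1)) = inl (n, k1) from by
            simp only [pPE, if_true]; rw [if_pos hkc]] at hx
          have hvX : ValidPlace D (inl (n, k1)) :=
            ⟨by omega, hp1, by show (k1:ℤ) ≤ D.W n; omega⟩
          have hvM : ValidPlace D (inl (n+1, k1 + D.O n - D.I n)) :=
            ⟨by omega, by omega, by show ((k1 + D.O n - D.I n : ℕ):ℤ) ≤ D.W (n+1); omega⟩
          refine eqv_congr (Subtype.ext hx) (Subtype.ext hy)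
            (x' := ⟨inl (n, k1), hvX⟩) (y' := ⟨inl (n+1+1, k2), hvY⟩)
            (EqvGen.trans _ (⟨inl (n+1, k1 + D.O n - D.I n), hvM⟩ : Place D) _
              (EqvGen.rel _ _ ?_) (EqvGen.rel _ _ ?_))
          · exact ⟨rfl, by omega,
              Or.inr ⟨by show ((k1 + D.O n - D.I n : ℕ):ℤ) = (k1:ℤ) + D.Δ n; rw [hddn]; omega,
                by show D.H n + D.I n + 1 ≤ k1; omega⟩⟩
          · exact ⟨rfl, by omega,
              Or.inl ⟨by show k2 = k1 + D.O n - D.I n; omega,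
                by show k1 + D.O n - D.I n ≤ D.H (n+1); omega⟩⟩
        · rw [show pPE D n (inl (n+1, k1)) = inl (n+1+1, k2) from by
            simp only [pPE, if_true]; rw [if_neg hkc]
            exact congrArg _ (congrArg _ (by omega))] at hx
          exact eqv_congr (Subtype.ext hx) (Subtype.ext hy)
            (x' := ⟨inl (n+1+1, k2), hvY⟩) (y' := ⟨inl (n+1+1, k2), hvY⟩) (EqvGen.refl _)
    · rw [if_neg hm1] at hpW
      rw [if_neg (by omega)] at hqW
      rw [pPE_id _ _ hm1] at hx
      rw [pPE_id _ _ (by omega : h1+1 ≠ n+1)] at hy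
      have hvX : ValidPlace D (inl (h1, k1)) := ⟨by omega, hp1, hpW⟩
      have hvY : ValidPlace D (inl (h1+1, k2)) := ⟨by omega, hq1, hqW⟩
      refine eqv_congr (Subtype.ext hx) (Subtype.ext hy)
        (x' := ⟨inl (h1, k1), hvX⟩) (y' := ⟨inl (h1+1, k2), hvY⟩) (EqvGen.rel _ _ ?_)
      refine ⟨rfl, by omega, ?_⟩
      rw [rxH D n h1 hm hm1] at e3
      rcases e3 with ⟨hk, hj⟩ | ⟨hk, hj⟩
      · exact Or.inl ⟨hk, hj⟩
      · rw [rxD D n h1 hm hm1] at hk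
        rw [rxI D n h1 hm hm1] at hj
        exact Or.inr ⟨hk, hj⟩

end Core9

end ExchProof
namespace ExchProof
open Diagram Sum Relation

section Core10

variable {D : Diagram} {n : ℕ}

lemma pP_fst (x : (ℕ × ℕ) ⊕ ℕ) (h k : ℕ) (hx : pP D n x = inl (h, k)) : h ≠ n + 1 := by
  rcases x with ⟨h', k'⟩ | v
  · by_cases hh : h' = n+1
    · subst hh
      simp only [pP, if_true] at hx
      split_ifs at hx <;> (injection hx with hx'; injection hx' with e1 e2; omega)
    · rw [pP_id _ _ hh] at hx
      injection hx with hx'; injection hx' with e1 e2; omega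
  · exact absurd hx (by simp [pP])

lemma pPE_fst (x : (ℕ × ℕ) ⊕ ℕ) (h k : ℕ) (hx : pPE D n x = inl (h, k)) : h ≠ n + 1 := by
  rcases x with ⟨h', k'⟩ | v
  · by_cases hh : h' = n+1
    · subst hh
      simp only [pPE, if_true] at hx
      split_ifs at hx <;> (injection hx with hx'; injection hx' with e1 e2; omega)
    · rw [pPE_id _ _ hh] at hx
      injection hx with hx'; injection hx' with e1 e2; omega
  · exact absurd hx (by simp [pPE])

lemma pPE_pP (x : (ℕ × ℕ) ⊕ ℕ) : pPE D n (pP D n x) = pP D n x ∨ pPE D n (pP D n x) = x := by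
  rcases x with ⟨h, k⟩ | v
  · by_cases hh : h = n+1
    · subst hh
      left
      simp only [pP, if_true]
      split_ifs with hk
      · exact pPE_id _ _ (by omega)
      · exact pPE_id _ _ (by omega)
    · right; rw [pP_id _ _ hh, pPE_id _ _ hh]
  · right
    show inr (swapAt n (swapAt n v)) = inr v
    rw [swap_swap]

lemma pP_pPE (x : (ℕ × ℕ) ⊕ ℕ) : pP D n (pPE D n x) = pPE D n x ∨ pP D n (pPE D n x) = x := by
  rcases x with ⟨h, k⟩ | v
  · by_cases hh : h = n+1
    · subst hh
      left
      simp only [pPE, if_true]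
      split_ifs with hk
      · exact pP_id _ _ (by omega)
      · exact pP_id _ _ (by omega)
    · right; rw [pPE_id _ _ hh, pP_id _ _ hh]
  · right
    show inr (swapAt n (swapAt n v)) = inr v
    rw [swap_swap]

lemma pP_equiv (hV : D.Valid) (hA : D.AdmitsRight n) (p x : Place D)
    (hx : x.1 = pP D n p.1) (hp : ∀ v, p.1 ≠ inr v) :
    Relation.EqvGen (PlaceAdj D) p x := by
  obtain ⟨hn1, hab⟩ := hA
  have hWa := hV n (by omega)
  have hWb := hV (n+1) hn1
  have hw1 : D.W (n+1) = D.W n + ((D.O n : ℤ) - (D.I n : ℤ)) := by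
    rw [show D.W (n+1) = D.W n + D.Δ n from by simp [Diagram.W]]; rfl
  have hw2 : D.W (n+2) = D.W (n+1) + ((D.O (n+1) : ℤ) - (D.I (n+1) : ℤ)) := by
    rw [show D.W (n+2) = D.W (n+1) + D.Δ (n+1) from by simp [Diagram.W]]; rfl
  push_cast at hWa hWb
  have hddn : D.Δ n = (D.O n : ℤ) - (D.I n : ℤ) := rfl
  obtain ⟨pv, hpv⟩ := p
  dsimp only at hx
  rcases pv with ⟨h, k⟩ | v
  · obtain ⟨h1, h2, h3⟩ := hpv
    by_cases hh : h = n+1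
    · subst hh
      by_cases hk : k ≤ D.H (n+1)
      · rw [show pP D n (inl (n+1, k)) = inl (n+2, k) from by
          simp only [pP, if_true]; rw [if_pos hk]] at hx
        have hvY : ValidPlace D (inl (n+2, k)) :=
          ⟨by omega, h2, by show (k:ℤ) ≤ D.W (n+2); omega⟩
        refine eqv_congr (x' := ⟨inl (n+1, k), ⟨h1, h2, h3⟩⟩) (y' := ⟨inl (n+2, k), hvY⟩)
          (Subtype.ext rfl) (Subtype.ext hx) (EqvGen.rel _ _ ?_)
        exact ⟨rfl, by omega, Or.inl ⟨rfl, by show k ≤ D.H (n+1); omega⟩⟩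
      · rw [show pP D n (inl (n+1, k)) = inl (n, k + D.I n - D.O n) from by
          simp only [pP, if_true]; rw [if_neg hk]] at hx
        have hvY : ValidPlace D (inl (n, k + D.I n - D.O n)) :=
          ⟨by omega, by omega, by show ((k + D.I n - D.O n : ℕ):ℤ) ≤ D.W n; omega⟩
        refine eqv_congr (x' := ⟨inl (n+1, k), ⟨h1, h2, h3⟩⟩)
          (y' := ⟨inl (n, k + D.I n - D.O n), hvY⟩)
          (Subtype.ext rfl) (Subtype.ext hx) (EqvGen.symm _ _ (EqvGen.rel _ _ ?_))
        exact ⟨rfl, by omega,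
          Or.inr ⟨by show (k:ℤ) = ((k + D.I n - D.O n : ℕ):ℤ) + D.Δ n; rw [hddn]; omega,
            by show D.H n + D.I n + 1 ≤ k + D.I n - D.O n; omega⟩⟩
    · rw [pP_id _ _ hh] at hx
      exact eqv_congr (x' := ⟨inl (h, k), ⟨h1, h2, h3⟩⟩) (y' := ⟨inl (h, k), ⟨h1, h2, h3⟩⟩)
        (Subtype.ext rfl) (Subtype.ext hx) (EqvGen.refl _)
  · exact absurd rfl (hp v)

lemma pPE_equiv (hV : D.Valid) (hA : D.AdmitsRight n) (p x : Place (D.rightExchange n))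
    (hx : x.1 = pPE D n p.1) (hp : ∀ v, p.1 ≠ inr v) :
    Relation.EqvGen (PlaceAdj (D.rightExchange n)) p x := by
  obtain ⟨hn1, hab⟩ := hA
  have hWa := hV n (by omega)
  have hWb := hV (n+1) hn1
  have hw1 : D.W (n+1) = D.W n + ((D.O n : ℤ) - (D.I n : ℤ)) := by
    rw [show D.W (n+1) = D.W n + D.Δ n from by simp [Diagram.W]]; rfl
  have hw2 : D.W (n+2) = D.W (n+1) + ((D.O (n+1) : ℤ) - (D.I (n+1) : ℤ)) := by
    rw [show D.W (n+2) = D.W (n+1) + D.Δ (n+1) from by simp [Diagram.W]]; rfl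
  push_cast at hWa hWb
  have hdd1 : D.Δ (n+1) = (D.O (n+1) : ℤ) - (D.I (n+1) : ℤ) := rfl
  have eHn : (D.rightExchange n).H n = D.H (n+1) + D.I n - D.O n := rxH_n D n
  have eHn1 : (D.rightExchange n).H (n+1) = D.H n := rxH_n1 D n
  have eIn1 : (D.rightExchange n).I (n+1) = D.I n := rxI_n1 D n
  have eDn1 : (D.rightExchange n).Δ (n+1) = (D.O n : ℤ) - (D.I n : ℤ) := by
    rw [rxD_n1]; rfl
  obtain ⟨pv, hpv⟩ := p
  dsimp only at hx hp
  rcases pv with ⟨h, k⟩ | v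
  · obtain ⟨h1, h2, h3⟩ := hpv
    rw [show (D.rightExchange n).N = D.N from rfl] at h1
    rw [rxW] at h3
    by_cases hh : h = n+1
    · subst hh
      rw [if_pos rfl, hdd1] at h3
      have hpv' : ValidPlace (D.rightExchange n) (inl (n+1, k)) :=
        ⟨by show n+1 ≤ D.N; omega, h2,
         by show (k:ℤ) ≤ (D.rightExchange n).W (n+1); rw [rxW, if_pos rfl, hdd1]; omega⟩
      by_cases hk : k ≤ D.H (n+1) + D.I n - D.O n
      · rw [show pPE D n (inl (n+1, k)) = inl (n, k) from by
          simp only [pPE, if_true]; rw [if_pos hk]] at hx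
        have hvY : ValidPlace (D.rightExchange n) (inl (n, k)) :=
          ⟨by show n ≤ D.N; omega, h2,
           by show (k:ℤ) ≤ (D.rightExchange n).W n; rw [rxW, if_neg (by omega)]; omega⟩
        refine eqv_congr (x' := ⟨inl (n+1, k), hpv'⟩) (y' := ⟨inl (n, k), hvY⟩)
          (Subtype.ext rfl) (Subtype.ext hx) (EqvGen.symm _ _ (EqvGen.rel _ _ ?_))
        exact ⟨rfl, by show n < D.N; omega,
          Or.inl ⟨rfl, by show k ≤ (D.rightExchange n).H n; rw [eHn]; omega⟩⟩
      · rw [show pPE D n (inl (n+1, k)) = inl (n+2, k + D.O n - D.I n) from by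
          simp only [pPE, if_true]; rw [if_neg hk]] at hx
        have hvY : ValidPlace (D.rightExchange n) (inl (n+2, k + D.O n - D.I n)) :=
          ⟨by show n+2 ≤ D.N; omega, by omega,
           by show ((k + D.O n - D.I n : ℕ):ℤ) ≤ (D.rightExchange n).W (n+2)
              rw [rxW, if_neg (by omega)]; omega⟩
        refine eqv_congr (x' := ⟨inl (n+1, k), hpv'⟩)
          (y' := ⟨inl (n+2, k + D.O n - D.I n), hvY⟩)
          (Subtype.ext rfl) (Subtype.ext hx) (EqvGen.rel _ _ ?_)
        exact ⟨rfl, by show n+1 < D.N; omega,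
          Or.inr ⟨by show ((k + D.O n - D.I n : ℕ):ℤ) = (k:ℤ) + (D.rightExchange n).Δ (n+1); rw [eDn1]; omega,
            by show (D.rightExchange n).H (n+1) + (D.rightExchange n).I (n+1) + 1 ≤ k
               rw [eHn1, eIn1]; omega⟩⟩
    · rw [pPE_id _ _ hh] at hx
      rw [if_neg hh] at h3
      have hpv' : ValidPlace (D.rightExchange n) (inl (h, k)) :=
        ⟨by show h ≤ D.N; omega, h2,
         by show (k:ℤ) ≤ (D.rightExchange n).W h; rw [rxW, if_neg hh]; exact h3⟩
      exact eqv_congr (x' := ⟨inl (h, k), hpv'⟩) (y' := ⟨inl (h, k), hpv'⟩)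
        (Subtype.ext rfl) (Subtype.ext hx) (EqvGen.refl _)
  · exact absurd rfl (hp v)

/-- The place map `Place D → Place (D.rightExchange n)`. -/
def fPlace (hV : D.Valid) (hA : D.AdmitsRight n) (p : Place D) : Place (D.rightExchange n) :=
  ⟨pP D n p.1, pP_validE hV hA p.1 p.2⟩

/-- The place map `Place (D.rightExchange n) → Place D`. -/
def gPlace (hV : D.Valid) (hA : D.AdmitsRight n) (p : Place (D.rightExchange n)) : Place D :=
  ⟨pPE D n p.1, pPE_validD hV hA p.1 p.2⟩

lemma pP_adj_star (hV : D.Valid) (hA : D.AdmitsRight n) {a b : Place D}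
    (h : Relation.EqvGen (PlaceAdj D) a b) :
    Relation.EqvGen (PlaceAdj (D.rightExchange n)) (fPlace hV hA a) (fPlace hV hA b) := by
  induction h with
  | rel a b hab => exact pP_adj hV hA a b hab _ _ rfl rfl
  | refl a => exact EqvGen.refl _
  | symm a b _ ih => exact EqvGen.symm _ _ ih
  | trans a b c _ _ ih1 ih2 => exact EqvGen.trans _ _ _ ih1 ih2

lemma pPE_adj_star (hV : D.Valid) (hA : D.AdmitsRight n) {a b : Place (D.rightExchange n)}
    (h : Relation.EqvGen (PlaceAdj (D.rightExchange n)) a b) :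
    Relation.EqvGen (PlaceAdj D) (gPlace hV hA a) (gPlace hV hA b) := by
  induction h with
  | rel a b hab => exact pPE_adj hV hA a b hab _ _ rfl rfl
  | refl a => exact EqvGen.refl _
  | symm a b _ ih => exact EqvGen.symm _ _ ih
  | trans a b c _ _ ih1 ih2 => exact EqvGen.trans _ _ _ ih1 ih2

lemma gf_place (hV : D.Valid) (hA : D.AdmitsRight n) (p : Place D) :
    Relation.EqvGen (PlaceAdj D) (gPlace hV hA (fPlace hV hA p)) p := by
  rcases p with ⟨pv, hpv⟩
  rcases pv with ⟨h, k⟩ | v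
  · rcases pPE_pP (D := D) (n := n) (inl (h, k)) with hcase | hcase
    · refine EqvGen.symm _ _ ?_
      exact pP_equiv hV hA ⟨inl (h, k), hpv⟩ _ hcase (by intro v hc; exact absurd hc (by simp))
    · exact eqv_congr (x' := ⟨inl (h, k), hpv⟩) (y' := ⟨inl (h, k), hpv⟩)
        (Subtype.ext hcase) rfl (EqvGen.refl _)
  · have : pPE D n (pP D n (inr v)) = inr v := by
      show inr (swapAt n (swapAt n v)) = inr v
      rw [swap_swap]
    exact eqv_congr (x' := ⟨inr v, hpv⟩) (y' := ⟨inr v, hpv⟩)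
      (Subtype.ext this) rfl (EqvGen.refl _)

lemma fg_place (hV : D.Valid) (hA : D.AdmitsRight n) (p : Place (D.rightExchange n)) :
    Relation.EqvGen (PlaceAdj (D.rightExchange n)) (fPlace hV hA (gPlace hV hA p)) p := by
  rcases p with ⟨pv, hpv⟩
  rcases pv with ⟨h, k⟩ | v
  · rcases pP_pPE (D := D) (n := n) (inl (h, k)) with hcase | hcase
    · refine EqvGen.symm _ _ ?_
      exact pPE_equiv hV hA ⟨inl (h, k), hpv⟩ _ hcase (by intro v hc; exact absurd hc (by simp))
    · exact eqv_congr (x' := ⟨inl (h, k), hpv⟩) (y' := ⟨inl (h, k), hpv⟩)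
        (Subtype.ext hcase) rfl (EqvGen.refl _)
  · have : pP D n (pPE D n (inr v)) = inr v := by
      show inr (swapAt n (swapAt n v)) = inr v
      rw [swap_swap]
    exact eqv_congr (x' := ⟨inr v, hpv⟩) (y' := ⟨inr v, hpv⟩)
      (Subtype.ext this) rfl (EqvGen.refl _)

/-- The component bijection induced by a right exchange. -/
def compEquiv (hV : D.Valid) (hA : D.AdmitsRight n) : Comp D ≃ Comp (D.rightExchange n) where
  toFun := Quotient.lift
    (fun p => Quotient.mk (compSetoid (D.rightExchange n)) (fPlace hV hA p))
    (fun a b h => Quotient.sound (pP_adj_star hV hA h))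
  invFun := Quotient.lift
    (fun p => Quotient.mk (compSetoid D) (gPlace hV hA p))
    (fun a b h => Quotient.sound (pPE_adj_star hV hA h))
  left_inv := by
    refine Quotient.ind (fun p => ?_)
    exact Quotient.sound (gf_place hV hA p)
  right_inv := by
    refine Quotient.ind (fun p => ?_)
    exact Quotient.sound (fg_place hV hA p)

end Core10

end ExchProof
namespace ExchProof
open Diagram Sum Relation

section Core11

variable {D : Diagram} {n : ℕ}

lemma push_witness (hV : D.Valid) (hA : D.AdmitsRight n) (p : Place D) (s : Spot D)
    (h0 k k' : ℕ) (hpeq : p.1 = inl (h0, k')) (hseq : s.1 = (h0, k))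
    (hkk : k' = k ∨ k' = k + 1) :
    ∃ (p' : Place D) (s' : Spot D) (h1 j j' : ℕ),
      Quotient.mk (compSetoid D) p' = Quotient.mk (compSetoid D) p ∧
      Quotient.mk (faceSetoid D) s' = Quotient.mk (faceSetoid D) s ∧
      p'.1 = inl (h1, j') ∧ s'.1 = (h1, j) ∧ (j' = j ∨ j' = j + 1) ∧ h1 ≠ n + 1 := by
  by_cases hh : h0 = n + 1
  · subst hh
    obtain ⟨hn1, hab⟩ := hA
    have hWa := hV n (by omega)
    have hWb := hV (n+1) hn1
    have hw1 : D.W (n+1) = D.W n + ((D.O n : ℤ) - (D.I n : ℤ)) := by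
      rw [show D.W (n+1) = D.W n + D.Δ n from by simp [Diagram.W]]; rfl
    have hw2 : D.W (n+2) = D.W (n+1) + ((D.O (n+1) : ℤ) - (D.I (n+1) : ℤ)) := by
      rw [show D.W (n+2) = D.W (n+1) + D.Δ (n+1) from by simp [Diagram.W]]; rfl
    push_cast at hWa hWb
    have hddn : D.Δ n = (D.O n : ℤ) - (D.I n : ℤ) := rfl
    obtain ⟨pv, hpv⟩ := p
    obtain ⟨sv, hsv⟩ := s
    dsimp only at hpeq hseq
    subst hpeq
    subst hseq
    obtain ⟨hpN, hp1, hpW⟩ := hpv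
    obtain ⟨hsN, hsW⟩ := hsv
    dsimp only at hpW hsW
    by_cases hk' : k' ≤ D.H (n+1)
    · -- push both down to level n+2
      have hvP : ValidPlace D (inl (n+2, k')) :=
        ⟨by omega, hp1, by show (k':ℤ) ≤ D.W (n+2); omega⟩
      have hvS : ValidSpot D (n+2, k) :=
        ⟨by omega, by show (k:ℤ) ≤ D.W (n+2); omega⟩
      refine ⟨⟨inl (n+2, k'), hvP⟩, ⟨(n+2, k), hvS⟩, n+2, k, k', ?_, ?_, rfl, rfl, hkk, by omega⟩
      · refine Quotient.sound (EqvGen.symm _ _ (EqvGen.rel _ _ ?_))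
        exact ⟨rfl, by show n+1 < D.N; omega, Or.inl ⟨rfl, by show k' ≤ D.H (n+1); omega⟩⟩
      · refine Quotient.sound (EqvGen.symm _ _ (EqvGen.rel _ _ ?_))
        exact ⟨rfl, by show n+1 < D.N; omega, Or.inl ⟨rfl, by show k ≤ D.H (n+1); omega⟩⟩
    · -- push both up to level n
      have hvP : ValidPlace D (inl (n, k' + D.I n - D.O n)) :=
        ⟨by omega, by omega, by show ((k' + D.I n - D.O n : ℕ):ℤ) ≤ D.W n; omega⟩
      have hvS : ValidSpot D (n, k + D.I n - D.O n) :=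
        ⟨by omega, by show ((k + D.I n - D.O n : ℕ):ℤ) ≤ D.W n; omega⟩
      refine ⟨⟨inl (n, k' + D.I n - D.O n), hvP⟩, ⟨(n, k + D.I n - D.O n), hvS⟩,
        n, k + D.I n - D.O n, k' + D.I n - D.O n, ?_, ?_, rfl, rfl, by omega, by omega⟩
      · refine Quotient.sound (EqvGen.rel _ _ ?_)
        exact ⟨rfl, by show n < D.N; omega,
          Or.inr ⟨by show (k':ℤ) = ((k' + D.I n - D.O n : ℕ):ℤ) + D.Δ n; rw [hddn]; omega,
            by show D.H n + D.I n + 1 ≤ k' + D.I n - D.O n; omega⟩⟩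
      · refine Quotient.sound (EqvGen.rel _ _ ?_)
        exact ⟨rfl, by show n < D.N; omega,
          Or.inr ⟨by show (k:ℤ) = ((k + D.I n - D.O n : ℕ):ℤ) + D.Δ n; rw [hddn]; omega,
            by show D.H n + D.I n ≤ k + D.I n - D.O n; omega⟩⟩
  · exact ⟨p, s, h0, k, k', rfl, rfl, hpeq, hseq, hkk, hh⟩

lemma push_witnessE (hV : D.Valid) (hA : D.AdmitsRight n)
    (p : Place (D.rightExchange n)) (s : Spot (D.rightExchange n))
    (h0 k k' : ℕ) (hpeq : p.1 = inl (h0, k')) (hseq : s.1 = (h0, k))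
    (hkk : k' = k ∨ k' = k + 1) :
    ∃ (p' : Place (D.rightExchange n)) (s' : Spot (D.rightExchange n)) (h1 j j' : ℕ),
      Quotient.mk (compSetoid (D.rightExchange n)) p' =
        Quotient.mk (compSetoid (D.rightExchange n)) p ∧
      Quotient.mk (faceSetoid (D.rightExchange n)) s' =
        Quotient.mk (faceSetoid (D.rightExchange n)) s ∧
      p'.1 = inl (h1, j') ∧ s'.1 = (h1, j) ∧ (j' = j ∨ j' = j + 1) ∧ h1 ≠ n + 1 := by
  by_cases hh : h0 = n + 1
  · subst hh
    obtain ⟨hn1, hab⟩ := hA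
    have hWa := hV n (by omega)
    have hWb := hV (n+1) hn1
    have hw1 : D.W (n+1) = D.W n + ((D.O n : ℤ) - (D.I n : ℤ)) := by
      rw [show D.W (n+1) = D.W n + D.Δ n from by simp [Diagram.W]]; rfl
    have hw2 : D.W (n+2) = D.W (n+1) + ((D.O (n+1) : ℤ) - (D.I (n+1) : ℤ)) := by
      rw [show D.W (n+2) = D.W (n+1) + D.Δ (n+1) from by simp [Diagram.W]]; rfl
    push_cast at hWa hWb
    have hdd1 : D.Δ (n+1) = (D.O (n+1) : ℤ) - (D.I (n+1) : ℤ) := rfl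
    have eHn : (D.rightExchange n).H n = D.H (n+1) + D.I n - D.O n := rxH_n D n
    have eHn1 : (D.rightExchange n).H (n+1) = D.H n := rxH_n1 D n
    have eIn1 : (D.rightExchange n).I (n+1) = D.I n := rxI_n1 D n
    have eDn1 : (D.rightExchange n).Δ (n+1) = (D.O n : ℤ) - (D.I n : ℤ) := by
      rw [rxD_n1]; rfl
    obtain ⟨pv, hpv⟩ := p
    obtain ⟨sv, hsv⟩ := s
    dsimp only at hpeq hseq
    subst hpeq
    subst hseq
    obtain ⟨hpN, hp1, hpW⟩ := hpv
    obtain ⟨hsN, hsW⟩ := hsv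
    dsimp only at hpW hsW
    rw [rxW, if_pos rfl, hdd1] at hpW hsW
    by_cases hk' : k' ≤ D.H (n+1) + D.I n - D.O n
    · -- push both up to level n
      have hvP : ValidPlace (D.rightExchange n) (inl (n, k')) :=
        ⟨by show n ≤ D.N; omega, hp1,
         by show (k':ℤ) ≤ (D.rightExchange n).W n; rw [rxW, if_neg (by omega)]; omega⟩
      have hvS : ValidSpot (D.rightExchange n) (n, k) :=
        ⟨by show n ≤ D.N; omega,
         by show (k:ℤ) ≤ (D.rightExchange n).W n; rw [rxW, if_neg (by omega)]; omega⟩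
      refine ⟨⟨inl (n, k'), hvP⟩, ⟨(n, k), hvS⟩, n, k, k', ?_, ?_, rfl, rfl, hkk, by omega⟩
      · refine Quotient.sound (EqvGen.rel _ _ ?_)
        exact ⟨rfl, by show n < D.N; omega,
          Or.inl ⟨rfl, by show k' ≤ (D.rightExchange n).H n; rw [eHn]; omega⟩⟩
      · refine Quotient.sound (EqvGen.rel _ _ ?_)
        exact ⟨rfl, by show n < D.N; omega,
          Or.inl ⟨rfl, by show k ≤ (D.rightExchange n).H n; rw [eHn]; omega⟩⟩
    · -- push both down to level n+2
      have hvP : ValidPlace (D.rightExchange n) (inl (n+2, k' + D.O n - D.I n)) :=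
        ⟨by show n+2 ≤ D.N; omega, by omega,
         by show ((k' + D.O n - D.I n : ℕ):ℤ) ≤ (D.rightExchange n).W (n+2)
            rw [rxW, if_neg (by omega)]; omega⟩
      have hvS : ValidSpot (D.rightExchange n) (n+2, k + D.O n - D.I n) :=
        ⟨by show n+2 ≤ D.N; omega,
         by show ((k + D.O n - D.I n : ℕ):ℤ) ≤ (D.rightExchange n).W (n+2)
            rw [rxW, if_neg (by omega)]; omega⟩
      refine ⟨⟨inl (n+2, k' + D.O n - D.I n), hvP⟩, ⟨(n+2, k + D.O n - D.I n), hvS⟩,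
        n+2, k + D.O n - D.I n, k' + D.O n - D.I n, ?_, ?_, rfl, rfl, by omega, by omega⟩
      · refine Quotient.sound (EqvGen.symm _ _ (EqvGen.rel _ _ ?_))
        exact ⟨rfl, by show n+1 < D.N; omega,
          Or.inr ⟨by show ((k' + D.O n - D.I n : ℕ):ℤ) = (k':ℤ) + (D.rightExchange n).Δ (n+1); rw [eDn1]; omega,
            by show (D.rightExchange n).H (n+1) + (D.rightExchange n).I (n+1) + 1 ≤ k'
               rw [eHn1, eIn1]; omega⟩⟩
      · refine Quotient.sound (EqvGen.symm _ _ (EqvGen.rel _ _ ?_))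
        exact ⟨rfl, by show n+1 < D.N; omega,
          Or.inr ⟨by show ((k + D.O n - D.I n : ℕ):ℤ) = (k:ℤ) + (D.rightExchange n).Δ (n+1); rw [eDn1]; omega,
            by show (D.rightExchange n).H (n+1) + (D.rightExchange n).I (n+1) ≤ k
               rw [eHn1, eIn1]; omega⟩⟩
  · exact ⟨p, s, h0, k, k', rfl, rfl, hpeq, hseq, hkk, hh⟩

theorem exchange_pack (hV : D.Valid) (hA : D.AdmitsRight n) :
    ∃ (φF : Face D ≃ Face (D.rightExchange n)) (φC : Comp D ≃ Comp (D.rightExchange n)),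
      ∀ (c : Comp D) (f : Face D),
        NbrCF D c f ↔ NbrCF (D.rightExchange n) (φC c) (φF f) := by
  refine ⟨faceEquiv hV hA, compEquiv hV hA, fun c f => ⟨?_, ?_⟩⟩
  · rintro ⟨p, s, hp, hs, hn⟩
    obtain ⟨h0, k, k', hpeq, hseq, hkk⟩ := hn
    obtain ⟨p', s', h1, j, j', hcp, hcs, hp'eq, hs'eq, hjj, hne⟩ :=
      push_witness hV hA p s h0 k k' hpeq hseq hkk
    refine ⟨fPlace hV hA p', fSpot hV hA s', ?_, ?_, ?_⟩
    · rw [← hp, ← hcp]; rfl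
    · rw [← hs, ← hcs]; rfl
    · refine ⟨h1, j, j', ?_, ?_, hjj⟩
      · show pP D n p'.1 = inl (h1, j')
        rw [hp'eq]; exact pP_id _ _ hne
      · show pS D n s'.1 = (h1, j)
        rw [hs'eq]; exact pS_id _ hne
  · rintro ⟨p, s, hp, hs, hn⟩
    obtain ⟨h0, k, k', hpeq, hseq, hkk⟩ := hn
    obtain ⟨p', s', h1, j, j', hcp, hcs, hp'eq, hs'eq, hjj, hne⟩ :=
      push_witnessE hV hA p s h0 k k' hpeq hseq hkk
    refine ⟨gPlace hV hA p', gSpot hV hA s', ?_, ?_, ?_⟩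
    · have h2 := congrArg (compEquiv hV hA).symm (hcp.trans hp)
      simp at h2; exact h2
    · have h2 := congrArg (faceEquiv hV hA).symm (hcs.trans hs)
      simp at h2; exact h2
    · refine ⟨h1, j, j', ?_, ?_, hjj⟩
      · show pPE D n p'.1 = inl (h1, j')
        rw [hp'eq]; exact pPE_id _ _ hne
      · show pSE D n s'.1 = (h1, j)
        rw [hs'eq]; exact pSE_id _ hne

lemma pack_cast {A B B' : Diagram} (e : B = B')
    (h : ∃ (φF : Face A ≃ Face B) (φC : Comp A ≃ Comp B),
      ∀ c f, NbrCF A c f ↔ NbrCF B (φC c) (φF f)) :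
    ∃ (φF : Face A ≃ Face B') (φC : Comp A ≃ Comp B'),
      ∀ c f, NbrCF A c f ↔ NbrCF B' (φC c) (φF f) := by
  subst e; exact h

lemma pack_symm {A B : Diagram}
    (h : ∃ (φF : Face A ≃ Face B) (φC : Comp A ≃ Comp B),
      ∀ c f, NbrCF A c f ↔ NbrCF B (φC c) (φF f)) :
    ∃ (φF : Face B ≃ Face A) (φC : Comp B ≃ Comp A),
      ∀ c f, NbrCF B c f ↔ NbrCF A (φC c) (φF f) := by
  obtain ⟨φF, φC, hcf⟩ := h
  refine ⟨φF.symm, φC.symm, fun c f => ?_⟩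
  have h2 := hcf (φC.symm c) (φF.symm f)
  simpa using h2.symm

end Core11

end ExchProof
/-- a single (right or left) exchange induces bijections between faces
and between components which respect the neighbourhood relation `c ◊ f`. -/
theorem exchange_bijection_faces_components (D : Diagram) (n : ℕ)
    (hV : D.Valid) (hC : D.Closed) :
    (D.AdmitsRight n →
      ∃ (φF : Face D ≃ Face (D.rightExchange n)) (φC : Comp D ≃ Comp (D.rightExchange n)),
        ∀ (c : Comp D) (f : Face D),
          NbrCF D c f ↔ NbrCF (D.rightExchange n) (φC c) (φF f)) ∧
    (D.AdmitsLeft n →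
      ∃ (φF : Face D ≃ Face (D.leftExchange n)) (φC : Comp D ≃ Comp (D.leftExchange n)),
        ∀ (c : Comp D) (f : Face D),
          NbrCF D c f ↔ NbrCF (D.leftExchange n) (φC c) (φF f)) := by
  constructor
  · intro hA
    exact ExchProof.exchange_pack hV hA
  · intro hA
    have h1 := ExchProof.lx_valid D n hV hA
    have h2 := ExchProof.lx_admitsRight D n hA
    have h3 := ExchProof.lx_rx D n hA
    exact ExchProof.pack_symm (ExchProof.pack_cast h3 (ExchProof.exchange_pack h1 h2))
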